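/- arXiv:1603.04107 — 6 statements merged into one kernel-verified Lean document; each statement's English description precedes it below -/
import Mathlib

section
/- Let a, b < 1 be real numbers and let (W_n), (X_n) be real sequences with X_0 = W_0 = 0 satisfying X_n = W_n + a·M_n + b·m_n for all n ≥ 0, where M_n = max_{k≤n} X_k and m_n = min_{k≤n} X_k. Then M_n = (1/(1−a)) · max_{k≤n} (W_k + (b/(1−b)) g_k), where g_k = min_{l≤k} (W_l + a·M_l). -/
open Finset

/-- Running maximum `max_{k ≤ n} x_k`. -/
noncomputable def runMax (x : ℕ → ℝ) (n : ℕ) : ℝ :=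
  (range (n + 1)).sup' nonempty_range_add_one x

/-- Running minimum `min_{k ≤ n} x_k`. -/
noncomputable def runMin (x : ℕ → ℝ) (n : ℕ) : ℝ :=
  (range (n + 1)).inf' nonempty_range_add_one x

lemma le_runMax (x : ℕ → ℝ) {k n : ℕ} (h : k ≤ n) : x k ≤ runMax x n :=
  Finset.le_sup' x (Finset.mem_range.2 (Nat.lt_succ_of_le h))

lemma runMin_le (x : ℕ → ℝ) {k n : ℕ} (h : k ≤ n) : runMin x n ≤ x k :=
  Finset.inf'_le x (Finset.mem_range.2 (Nat.lt_succ_of_le h))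

lemma runMax_le (x : ℕ → ℝ) {n : ℕ} {c : ℝ} (h : ∀ k ≤ n, x k ≤ c) : runMax x n ≤ c :=
  Finset.sup'_le _ _ fun k hk => h k (Nat.lt_succ_iff.1 (Finset.mem_range.1 hk))

lemma le_runMin (x : ℕ → ℝ) {n : ℕ} {c : ℝ} (h : ∀ k ≤ n, c ≤ x k) : c ≤ runMin x n :=
  Finset.le_inf' _ _ fun k hk => h k (Nat.lt_succ_iff.1 (Finset.mem_range.1 hk))

lemma exists_runMax (x : ℕ → ℝ) (n : ℕ) : ∃ k ≤ n, runMax x n = x k := by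
  obtain ⟨k, hk, h⟩ := Finset.exists_mem_eq_sup' (nonempty_range_add_one (n := n)) x
  exact ⟨k, Nat.lt_succ_iff.1 (Finset.mem_range.1 hk), h⟩

lemma exists_runMin (x : ℕ → ℝ) (n : ℕ) : ∃ k ≤ n, runMin x n = x k := by
  obtain ⟨k, hk, h⟩ := Finset.exists_mem_eq_inf' (nonempty_range_add_one (n := n)) x
  exact ⟨k, Nat.lt_succ_iff.1 (Finset.mem_range.1 hk), h⟩

/-- if `X_n = W_n + a M_n + b m_n` with `a, b < 1`, then
`M_n = (1/(1−a)) · max_{k≤n} (W_k + (b/(1−b)) g_k)` where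
`g_k = min_{l≤k}(W_l + a M_l)`. -/
theorem runMax_eq_of_perturbed (a b : ℝ) (ha : a < 1) (hb : b < 1) (W X : ℕ → ℝ)
    (hX0 : X 0 = 0) (hW0 : W 0 = 0)
    (hXn : ∀ n, X n = W n + a * runMax X n + b * runMin X n) (n : ℕ) :
    runMax X n = (1 / (1 - a)) *
      runMax (fun k => W k + (b / (1 - b)) *
        runMin (fun l => W l + a * runMax X l) k) n := by
  have hb' : (0:ℝ) < 1 - b := by linarith
  have ha' : (0:ℝ) < 1 - a := by linarith
  -- key : g_k = (1-b) * m_k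
  have key : ∀ k, runMin (fun l => W l + a * runMax X l) k = (1 - b) * runMin X k := by
    intro k
    apply le_antisymm
    · obtain ⟨l, hl, hlmin⟩ := exists_runMin X k
      have h1 : runMin X l = runMin X k := by
        apply le_antisymm
        · rw [hlmin]; exact runMin_le X le_rfl
        · exact le_runMin X fun j hj => runMin_le X (hj.trans hl)
      have h2 := hXn l
      calc runMin (fun l => W l + a * runMax X l) k ≤ W l + a * runMax X l :=
            runMin_le _ hl
        _ = (1 - b) * runMin X k := by rw [h1] at h2; linarith
    · apply le_runMin
      intro l hl
      have h1 := hXn l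
      have h2 : runMin X k ≤ X l := runMin_le X hl
      have h3 : runMin X k ≤ runMin X l := le_runMin X fun j hj => runMin_le X (hj.trans hl)
      have h4 : runMin X l ≤ X l := runMin_le X le_rfl
      nlinarith [mul_nonneg hb'.le (by linarith : (0:ℝ) ≤ runMin X l - runMin X k)]
  -- F k = X k - a * M k
  have hF : ∀ k, W k + (b / (1 - b)) * runMin (fun l => W l + a * runMax X l) k
      = X k - a * runMax X k := by
    intro k
    rw [key k]
    have h1 := hXn k
    have h2 : b / (1 - b) * ((1 - b) * runMin X k) = b * runMin X k := by
      field_simp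
    rw [h2]; linarith
  have hmain : runMax (fun k => W k + (b / (1 - b)) *
      runMin (fun l => W l + a * runMax X l) k) n = (1 - a) * runMax X n := by
    apply le_antisymm
    · apply runMax_le
      intro k hk
      rw [hF k]
      have h1 : X k ≤ runMax X k := le_runMax X le_rfl
      have h2 : runMax X k ≤ runMax X n :=
        runMax_le X fun j hj => le_runMax X (hj.trans hk)
      nlinarith [mul_nonneg ha'.le (by linarith : (0:ℝ) ≤ runMax X n - runMax X k)]
    · obtain ⟨k, hk, hkmax⟩ := exists_runMax X n
      have h1 : runMax X k = runMax X n := by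
        apply le_antisymm
        · exact runMax_le X fun j hj => le_runMax X (hj.trans hk)
        · rw [hkmax]; exact le_runMax X le_rfl
      have h2 : W k + (b / (1 - b)) * runMin (fun l => W l + a * runMax X l) k
          ≤ runMax (fun k => W k + (b / (1 - b)) *
            runMin (fun l => W l + a * runMax X l) k) n := by
        have := le_runMax (fun k => W k + (b / (1 - b)) *
          runMin (fun l => W l + a * runMax X l) k) hk
        simpa using this
      rw [hF k, h1, ← hkmax] at h2
      linarith
  rw [hmain]
  field_simp
end

section
/- Let a, b < 1 be real numbers and let (W_n), (X_n) be real sequences with X_0 = W_0 = 0 satisfying X_n = W_n + a·M_n + b·m_n for all n ≥ 0, where M_n = max_{k≤n} X_k and m_n = min_{k≤n} X_k. Then m_n = (1/(1−b)) · min_{k≤n} (W_k + (a/(1−a)) G_k), where G_k = max_{l≤k} (W_l + b·m_l). -/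
open Finset

lemma runMax_mono (x : ℕ → ℝ) {k n : ℕ} (h : k ≤ n) : runMax x k ≤ runMax x n := by
  apply Finset.sup'_le
  intro i hi
  exact le_runMax x (Nat.le_trans (Nat.lt_succ_iff.1 (mem_range.1 hi)) h)

lemma runMin_anti (x : ℕ → ℝ) {k n : ℕ} (h : k ≤ n) : runMin x n ≤ runMin x k := by
  apply Finset.le_inf'
  intro i hi
  exact runMin_le x (Nat.le_trans (Nat.lt_succ_iff.1 (mem_range.1 hi)) h)

lemma key_max (a : ℝ) (ha : a < 1) (X V : ℕ → ℝ)
    (hX : ∀ k, X k = V k + a * runMax X k) (n : ℕ) :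
    runMax V n = (1 - a) * runMax X n := by
  apply le_antisymm
  · apply Finset.sup'_le
    intro k hk
    have hk' : k ≤ n := Nat.lt_succ_iff.1 (mem_range.1 hk)
    have h1 : X k ≤ runMax X k := le_runMax X le_rfl
    have h2 : runMax X k ≤ runMax X n := runMax_mono X hk'
    have := hX k
    nlinarith
  · obtain ⟨k, hk, hkeq⟩ := Finset.exists_mem_eq_sup' (nonempty_range_add_one (n := n)) X
    have hkeq' : runMax X n = X k := hkeq
    have hk' : k ≤ n := Nat.lt_succ_iff.1 (mem_range.1 hk)
    have hMk : runMax X k = runMax X n := by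
      apply le_antisymm (runMax_mono X hk')
      rw [hkeq']; exact le_runMax X le_rfl
    have h3 : V k = (1 - a) * runMax X n := by
      have h4 := hX k
      rw [hMk] at h4
      linarith
    calc (1 - a) * runMax X n = V k := h3.symm
      _ ≤ runMax V n := le_runMax V hk'

lemma key_min (b : ℝ) (hb : b < 1) (X U : ℕ → ℝ)
    (hX : ∀ k, X k = U k + b * runMin X k) (n : ℕ) :
    runMin U n = (1 - b) * runMin X n := by
  apply le_antisymm
  · obtain ⟨k, hk, hkeq⟩ := Finset.exists_mem_eq_inf' (nonempty_range_add_one (n := n)) X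
    have hkeq' : runMin X n = X k := hkeq
    have hk' : k ≤ n := Nat.lt_succ_iff.1 (mem_range.1 hk)
    have hMk : runMin X k = runMin X n := by
      apply le_antisymm
      · rw [hkeq']; exact runMin_le X le_rfl
      · exact runMin_anti X hk'
    have h3 : U k = (1 - b) * runMin X n := by
      have h4 := hX k
      rw [hMk] at h4
      linarith
    calc runMin U n ≤ U k := runMin_le U hk'
      _ = (1 - b) * runMin X n := h3
  · apply Finset.le_inf'
    intro k hk
    have hk' : k ≤ n := Nat.lt_succ_iff.1 (mem_range.1 hk)
    have h1 : runMin X k ≤ X k := runMin_le X le_rfl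
    have h2 : runMin X n ≤ runMin X k := runMin_anti X hk'
    have := hX k
    nlinarith

/-- if `X_n = W_n + a M_n + b m_n` with `a, b < 1`, then
`m_n = (1/(1−b)) · min_{k≤n} (W_k + (a/(1−a)) G_k)` where
`G_k = max_{l≤k}(W_l + b m_l)`. -/
theorem runMin_eq_of_perturbed (a b : ℝ) (ha : a < 1) (hb : b < 1) (W X : ℕ → ℝ)
    (hX0 : X 0 = 0) (hW0 : W 0 = 0)
    (hXn : ∀ n, X n = W n + a * runMax X n + b * runMin X n) (n : ℕ) :
    runMin X n = (1 / (1 - b)) *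
      runMin (fun k => W k + (a / (1 - a)) *
        runMax (fun l => W l + b * runMin X l) k) n := by
  have ha' : (1 : ℝ) - a ≠ 0 := by linarith
  have hb' : (1 : ℝ) - b ≠ 0 := by linarith
  have hXV : ∀ k, X k = (fun l => W l + b * runMin X l) k + a * runMax X k := by
    intro k; simp only; linarith [hXn k]
  have hG : ∀ k, runMax (fun l => W l + b * runMin X l) k = (1 - a) * runMax X k :=
    fun k => key_max a ha X (fun l => W l + b * runMin X l) hXV k
  have hXU : ∀ k, X k = (fun k => W k + a * runMax X k) k + b * runMin X k := by
    intro k; simp only; linarith [hXn k]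
  have hmin := key_min b hb X (fun k => W k + a * runMax X k) hXU n
  have hfun : (fun k => W k + (a / (1 - a)) *
      runMax (fun l => W l + b * runMin X l) k) = (fun k => W k + a * runMax X k) := by
    funext k
    rw [hG k]
    field_simp
  rw [hfun, hmin]
  field_simp
end

section
/- Let (X_n) be a nearest-neighbor walk on ℤ with X_0 = 0, Δ_k = X_{k+1} − X_k ∈ {−1,+1}, and let M_n, m_n be the running maximum and minimum. Then for all n ≥ 1, X_{n−1} = m_{n−1} + M_{n−1} + Σ_{k=1}^{n−1} Δ_{k−1}·1{m_{k−1} ≤ X_k ≤ M_{k−1}}. -/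
open Finset

/-- Running maximum `max_{k ≤ n} x_k` of an integer sequence. -/
def runMaxZ (x : ℕ → ℤ) (n : ℕ) : ℤ :=
  (range (n + 1)).sup' nonempty_range_add_one x

/-- Running minimum `min_{k ≤ n} x_k` of an integer sequence. -/
def runMinZ (x : ℕ → ℤ) (n : ℕ) : ℤ :=
  (range (n + 1)).inf' nonempty_range_add_one x

lemma runMaxZ_succ (x : ℕ → ℤ) (m : ℕ) :
    runMaxZ x (m + 1) = max (x (m + 1)) (runMaxZ x m) := by
  unfold runMaxZ
  apply le_antisymm
  · apply sup'_le
    intro i hi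
    rcases Nat.lt_succ_iff_lt_or_eq.mp (mem_range.mp hi) with h | h
    · exact le_max_of_le_right (le_sup' x (mem_range.mpr h))
    · subst h; exact le_max_left _ _
  · exact max_le (le_sup' x (mem_range.mpr (by omega)))
      (sup'_le _ _ fun i hi => le_sup' x (mem_range.mpr (by have := mem_range.mp hi; omega)))

lemma runMinZ_succ (x : ℕ → ℤ) (m : ℕ) :
    runMinZ x (m + 1) = min (x (m + 1)) (runMinZ x m) := by
  unfold runMinZ
  apply le_antisymm
  · exact le_min (inf'_le x (mem_range.mpr (by omega)))
      (le_inf' _ _ fun i hi => inf'_le x (mem_range.mpr (by have := mem_range.mp hi; omega)))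
  · apply le_inf'
    intro i hi
    rcases Nat.lt_succ_iff_lt_or_eq.mp (mem_range.mp hi) with h | h
    · exact min_le_of_right_le (inf'_le x (mem_range.mpr h))
    · subst h; exact min_le_left _ _

lemma le_runMaxZ (x : ℕ → ℤ) (m : ℕ) : x m ≤ runMaxZ x m :=
  le_sup' x (self_mem_range_succ m)

lemma runMinZ_le (x : ℕ → ℤ) (m : ℕ) : runMinZ x m ≤ x m :=
  inf'_le x (self_mem_range_succ m)

/-- for a nearest-neighbor walk on `ℤ` started at `0`,
`X_{n−1} = m_{n−1} + M_{n−1} + Σ_{k=1}^{n−1} Δ_{k−1}·1{m_{k−1} ≤ X_k ≤ M_{k−1}}`. -/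
theorem walk_eq_min_add_max_add_sum (X : ℕ → ℤ) (hX0 : X 0 = 0)
    (hnn : ∀ k, X (k + 1) - X k = 1 ∨ X (k + 1) - X k = -1) (n : ℕ) (hn : 1 ≤ n) :
    X (n - 1) = runMinZ X (n - 1) + runMaxZ X (n - 1) +
      ∑ k ∈ Icc 1 (n - 1), (X k - X (k - 1)) *
        (if runMinZ X (k - 1) ≤ X k ∧ X k ≤ runMaxZ X (k - 1) then 1 else 0) := by
  suffices h : ∀ m : ℕ, X m = runMinZ X m + runMaxZ X m +
      ∑ k ∈ Icc 1 m, (X k - X (k - 1)) *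
        (if runMinZ X (k - 1) ≤ X k ∧ X k ≤ runMaxZ X (k - 1) then 1 else 0) from h (n - 1)
  intro m
  induction m with
  | zero =>
    simp [runMinZ, runMaxZ, hX0]
  | succ m ih =>
    rw [Finset.sum_Icc_succ_top (Nat.one_le_iff_ne_zero.mpr (Nat.succ_ne_zero m))]
    simp only [Nat.add_sub_cancel]
    rw [runMaxZ_succ, runMinZ_succ]
    have hmax := le_runMaxZ X m
    have hmin := runMinZ_le X m
    rcases le_or_gt (X (m + 1)) (runMaxZ X m) with hM | hM
    · rcases le_or_gt (runMinZ X m) (X (m + 1)) with hm | hm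
      · -- within range
        rw [if_pos ⟨hm, hM⟩, max_eq_right hM, min_eq_right hm]
        rw [ih] at *
        ring
      · -- new minimum
        rw [if_neg (by rintro ⟨h1, _⟩; exact absurd h1 (not_le.mpr hm))]
        have hd : X (m + 1) - X m = -1 := by
          rcases hnn m with h | h
          · exfalso; omega
          · exact h
        rw [max_eq_right hM, min_eq_left hm.le]
        have : X (m + 1) = X m - 1 := by omega
        rw [ih] at *
        omega
    · -- new maximum
      rw [if_neg (by rintro ⟨_, h2⟩; exact absurd h2 (not_le.mpr hM))]
      have hd : X (m + 1) - X m = 1 := by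
        rcases hnn m with h | h
        · exact h
        · exfalso; omega
      have hm' : runMinZ X m ≤ X (m + 1) := by omega
      rw [max_eq_left hM.le, min_eq_right hm']
      rw [ih] at *
      omega
end

section
/- Let (X_n) be the p-rotor walk on ℤ with parameter p ∈ (0,1) and (α,β)-random initial configuration, with martingale part Y_n = Σ_{k=0}^{n−1}(Δ_k − E[Δ_k|F_k]) where Δ_k = X_{k+1} − X_k. Then for all n ≥ 1, X_n = W_n + a·M_n + b·m_n, where a = α(2p−1)/p, b = β(2p−1)/p, and W_n = (Y_{n+1} − Δ_n)/(2p). -/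
set_option linter.unusedSectionVars false

open MeasureTheory ProbabilityTheory Finset

/-- One step of the p-rotor walk dynamics: given the current rotor configuration
and position `s = (ρ, x)` and the outcome `b ∈ {−1,+1}` of the coin (`b = 1`
means the rotor is broken and fails to flip), the rotor at `x` becomes
`b · ρ(x)` and the walker moves one step in the direction of the new rotor. -/
def rotorStep (s : (ℤ → ℤ) × ℤ) (b : ℤ) : (ℤ → ℤ) × ℤ :=
  let ρ' := Function.update s.1 s.2 (b * s.1 s.2)
  (ρ', s.2 + ρ' s.2)

/-- The state (rotor configuration, position) of the p-rotor walk after `n`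
steps, started at `0` with initial rotors `ρ0` and coin outcomes `b`. -/
def rotorState (ρ0 : ℤ → ℤ) (b : ℕ → ℤ) : ℕ → (ℤ → ℤ) × ℤ
  | 0 => (ρ0, 0)
  | n + 1 => rotorStep (rotorState ρ0 b n) (b n)

/-- The position of the p-rotor walk after `n` steps. -/
def rotorWalk (ρ0 : ℤ → ℤ) (b : ℕ → ℤ) (n : ℕ) : ℤ := (rotorState ρ0 b n).2

namespace RotorAux

/-! ### Deterministic lemmas about the rotor walk -/

section Det

variable (ρ0 : ℤ → ℤ) (b : ℕ → ℤ)

lemma pos_zero : (rotorState ρ0 b 0).2 = 0 := rfl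

lemma rotor_zero : (rotorState ρ0 b 0).1 = ρ0 := rfl

lemma rotor_succ (n : ℕ) :
    (rotorState ρ0 b (n + 1)).1 =
      Function.update (rotorState ρ0 b n).1 (rotorState ρ0 b n).2
        (b n * (rotorState ρ0 b n).1 (rotorState ρ0 b n).2) := rfl

lemma pos_succ (n : ℕ) :
    (rotorState ρ0 b (n + 1)).2 =
      (rotorState ρ0 b n).2 + b n * (rotorState ρ0 b n).1 (rotorState ρ0 b n).2 := by
  show (rotorState ρ0 b n).2 + _ = _
  rw [Function.update_self]

variable (hρ : ∀ y, ρ0 y = 1 ∨ ρ0 y = -1) (hb : ∀ n, b n = 1 ∨ b n = -1)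

include hρ hb

lemma rotor_pm : ∀ n y, (rotorState ρ0 b n).1 y = 1 ∨ (rotorState ρ0 b n).1 y = -1 := by
  intro n
  induction n with
  | zero => exact hρ
  | succ n ih =>
    intro y
    rw [rotor_succ]
    rcases eq_or_ne (rotorState ρ0 b n).2 y with h | h
    · rw [h, Function.update_self]
      rcases hb n with h1 | h1 <;> rcases ih y with h2 | h2 <;> rw [h1, h2] <;> norm_num
    · rw [Function.update_of_ne (Ne.symm h)]
      exact ih y

lemma step_pm (n : ℕ) :
    (rotorState ρ0 b (n + 1)).2 - (rotorState ρ0 b n).2 = 1 ∨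
      (rotorState ρ0 b (n + 1)).2 - (rotorState ρ0 b n).2 = -1 := by
  rw [pos_succ]
  rcases hb n with h1 | h1 <;>
    rcases rotor_pm ρ0 b hρ hb n (rotorState ρ0 b n).2 with h2 | h2 <;>
      rw [h1, h2] <;> simp

end Det

/-! ### Pure sequence lemmas -/

section Seq

variable {x : ℕ → ℤ}

lemma runMaxZ_zero (x : ℕ → ℤ) : runMaxZ x 0 = x 0 := by simp [runMaxZ]

lemma runMinZ_zero (x : ℕ → ℤ) : runMinZ x 0 = x 0 := by simp [runMinZ]

lemma runMaxZ_succ (x : ℕ → ℤ) (n : ℕ) :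
    runMaxZ x (n + 1) = max (runMaxZ x n) (x (n + 1)) := by
  apply le_antisymm
  · apply Finset.sup'_le
    intro i hi
    have hi' : i ≤ n + 1 := Nat.lt_succ_iff.1 (mem_range.1 hi)
    rcases Nat.lt_succ_iff_lt_or_eq.1 (Nat.lt_succ_of_le hi') with h | h
    · exact le_trans (Finset.le_sup' x (mem_range.2 h)) (le_max_left _ _)
    · rw [h]; exact le_max_right _ _
  · refine max_le (Finset.sup'_le _ _ fun i hi => Finset.le_sup' x ?_)
      (Finset.le_sup' x (mem_range.2 (Nat.lt_succ_self _)))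
    exact mem_range.2 ((mem_range.1 hi).trans (Nat.lt_succ_self _))

lemma runMinZ_succ (x : ℕ → ℤ) (n : ℕ) :
    runMinZ x (n + 1) = min (runMinZ x n) (x (n + 1)) := by
  apply le_antisymm
  · refine le_min (Finset.le_inf' _ _ fun i hi => Finset.inf'_le x ?_)
      (Finset.inf'_le x (mem_range.2 (Nat.lt_succ_self _)))
    exact mem_range.2 ((mem_range.1 hi).trans (Nat.lt_succ_self _))
  · apply Finset.le_inf'
    intro i hi
    have hi' : i ≤ n + 1 := Nat.lt_succ_iff.1 (mem_range.1 hi)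
    rcases Nat.lt_succ_iff_lt_or_eq.1 (Nat.lt_succ_of_le hi') with h | h
    · exact le_trans (min_le_left _ _) (Finset.inf'_le x (mem_range.2 h))
    · rw [h]; exact min_le_right _ _

lemma le_runMaxZ (x : ℕ → ℤ) {k n : ℕ} (h : k ≤ n) : x k ≤ runMaxZ x n :=
  Finset.le_sup' x (mem_range.2 (Nat.lt_succ_of_le h))

lemma runMinZ_le (x : ℕ → ℤ) {k n : ℕ} (h : k ≤ n) : runMinZ x n ≤ x k :=
  Finset.inf'_le x (mem_range.2 (Nat.lt_succ_of_le h))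

lemma runMaxZ_exists (x : ℕ → ℤ) (n : ℕ) : ∃ k ≤ n, runMaxZ x n = x k := by
  obtain ⟨k, hk, h⟩ := Finset.exists_mem_eq_sup' (nonempty_range_add_one (n := n)) x
  exact ⟨k, Nat.lt_succ_iff.1 (mem_range.1 hk), h⟩

lemma runMinZ_exists (x : ℕ → ℤ) (n : ℕ) : ∃ k ≤ n, runMinZ x n = x k := by
  obtain ⟨k, hk, h⟩ := Finset.exists_mem_eq_inf' (nonempty_range_add_one (n := n)) x
  exact ⟨k, Nat.lt_succ_iff.1 (mem_range.1 hk), h⟩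

variable (hstep : ∀ i, x (i + 1) - x i = 1 ∨ x (i + 1) - x i = -1)

include hstep

/-- Intermediate value: every integer between the running min and max is visited. -/
lemma visits_interval : ∀ n y, runMinZ x n ≤ y → y ≤ runMaxZ x n → ∃ j ≤ n, x j = y := by
  intro n
  induction n with
  | zero =>
    intro y h1 h2
    rw [runMinZ_zero] at h1; rw [runMaxZ_zero] at h2
    exact ⟨0, le_refl _, le_antisymm h2 h1 ▸ rfl⟩
  | succ n ih =>
    intro y h1 h2
    rw [runMinZ_succ] at h1
    rw [runMaxZ_succ] at h2
    rcases le_or_gt y (runMaxZ x n) with hy | hy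
    · rcases le_or_gt (runMinZ x n) y with hy' | hy'
      · obtain ⟨j, hj, hje⟩ := ih y hy' hy
        exact ⟨j, hj.trans (Nat.le_succ n), hje⟩
      · -- y < runMinZ x n, but min (runMinZ) (x (n+1)) ≤ y, so x (n+1) ≤ y
        have hx : x (n + 1) ≤ y := by
          rcases min_le_iff.1 h1 with h | h
          · omega
          · exact h
        -- x n ≥ runMinZ x n > y ≥ x (n+1), step is ±1 so x (n+1) = x n - 1 and y = x (n+1)
        have hxn : runMinZ x n ≤ x n := runMinZ_le x (le_refl n)
        rcases hstep n with h | h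
        · omega
        · have : x (n + 1) = y := by omega
          exact ⟨n + 1, le_refl _, this⟩
    · -- runMaxZ x n < y ≤ max _ (x (n+1)) so y ≤ x (n+1)
      have hx : y ≤ x (n + 1) := by
        rcases le_max_iff.1 h2 with h | h
        · omega
        · exact h
      have hxn : x n ≤ runMaxZ x n := le_runMaxZ x (le_refl n)
      rcases hstep n with h | h
      · have : x (n + 1) = y := by omega
        exact ⟨n + 1, le_refl _, this⟩
      · omega

/-- Confinement: between consecutive visits to a site the walk stays on one side,
so the entering direction is opposite to the last exiting direction. -/
lemma confine {j k : ℕ} (hjk : j < k) (heq : x j = x k)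
    (hlast : ∀ i, j < i → i < k → x i ≠ x j) :
    x (k - 1) - x k = x (j + 1) - x j := by
  have hd : x (j + 1) - x j = 1 ∨ x (j + 1) - x j = -1 := hstep j
  have hjk1 : j + 1 < k := by
    rcases Nat.lt_or_ge (j + 1) k with h | h
    · exact h
    · have hk : k = j + 1 := by omega
      subst hk
      rcases hd with h1 | h1 <;> omega
  have hk1 : k - 1 + 1 = k := by omega
  have hstepk := hstep (k - 1)
  rw [hk1] at hstepk
  rcases hd with hD | hD
  · -- d = 1 : walk stays strictly above x j between j and k
    have hside : ∀ i, j < i → i < k → 1 ≤ x i - x j := by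
      intro i
      induction i with
      | zero => intro h1 _; exact absurd h1 (Nat.not_lt_zero j)
      | succ i ih =>
        intro h1 h2
        rcases Nat.lt_or_ge j i with hji | hji
        · have hi : 1 ≤ x i - x j := ih hji (by omega)
          have hs := hstep i
          have hxne : x (i + 1) - x j ≠ 0 := sub_ne_zero_of_ne (hlast (i + 1) h1 h2)
          rcases hs with h' | h' <;> omega
        · have : i = j := by omega
          subst this
          omega
    have h1 : 1 ≤ x (k - 1) - x j := hside (k - 1) (by omega) (by omega)
    omega
  · have hside : ∀ i, j < i → i < k → x i - x j ≤ -1 := by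
      intro i
      induction i with
      | zero => intro h1 _; exact absurd h1 (Nat.not_lt_zero j)
      | succ i ih =>
        intro h1 h2
        rcases Nat.lt_or_ge j i with hji | hji
        · have hi : x i - x j ≤ -1 := ih hji (by omega)
          have hs := hstep i
          have hxne : x (i + 1) - x j ≠ 0 := sub_ne_zero_of_ne (hlast (i + 1) h1 h2)
          rcases hs with h' | h' <;> omega
        · have : i = j := by omega
          subst this
          omega
    have h1 : x (k - 1) - x j ≤ -1 := hside (k - 1) (by omega) (by omega)
    omega

end Seq

/-! ### Rotor value lemmas -/

section Rotor

variable (ρ0 : ℤ → ℤ) (b : ℕ → ℤ)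

/-- A never-visited site keeps its initial rotor. -/
lemma rotor_fresh (y : ℤ) : ∀ n, (∀ j < n, (rotorState ρ0 b j).2 ≠ y) →
    (rotorState ρ0 b n).1 y = ρ0 y := by
  intro n
  induction n with
  | zero => intro _; rfl
  | succ n ih =>
    intro h
    rw [rotor_succ, Function.update_of_ne (Ne.symm (h n (Nat.lt_succ_self n)))]
    exact ih fun j hj => h j (hj.trans (Nat.lt_succ_self n))

/-- Last exit: after the last visit to a site before time `n`, the rotor there
records the direction of the last departure. -/
lemma rotor_last_exit {j : ℕ} : ∀ n, j < n → (∀ i, j < i → i < n → (rotorState ρ0 b i).2 ≠ (rotorState ρ0 b j).2) →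
    (rotorState ρ0 b n).1 ((rotorState ρ0 b j).2) =
      (rotorState ρ0 b (j + 1)).2 - (rotorState ρ0 b j).2 := by
  intro n
  induction n with
  | zero => omega
  | succ n ih =>
    intro hjn hlast
    rcases Nat.lt_or_ge j n with hj | hj
    · rw [rotor_succ, Function.update_of_ne (Ne.symm (hlast n hj (Nat.lt_succ_self n)))]
      exact ih hj fun i h1 h2 => hlast i h1 (h2.trans (Nat.lt_succ_self n))
    · have : j = n := by omega
      subst this
      rw [rotor_succ, Function.update_self, pos_succ]
      ring

variable (hρ : ∀ y, ρ0 y = 1 ∨ ρ0 y = -1) (hb : ∀ n, b n = 1 ∨ b n = -1)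
include hρ hb

/-- On a revisit, the current rotor at the current site points back to the previous position. -/
lemma rotor_revisit {k : ℕ} (h : ∃ j, j < k ∧ (rotorState ρ0 b j).2 = (rotorState ρ0 b k).2) :
    (rotorState ρ0 b k).1 ((rotorState ρ0 b k).2) =
      (rotorState ρ0 b (k - 1)).2 - (rotorState ρ0 b k).2 := by
  classical
  obtain ⟨j, hjk, hje⟩ := h
  -- pass to the *last* visit before k
  have : ∀ m, ∀ j, k - j ≤ m → j < k → (rotorState ρ0 b j).2 = (rotorState ρ0 b k).2 →
      (rotorState ρ0 b k).1 ((rotorState ρ0 b k).2) =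
        (rotorState ρ0 b (k - 1)).2 - (rotorState ρ0 b k).2 := by
    intro m
    induction m with
    | zero => omega
    | succ m ih =>
      intro j hm hjk hje
      by_cases hmid : ∃ i, j < i ∧ i < k ∧ (rotorState ρ0 b i).2 = (rotorState ρ0 b k).2
      · obtain ⟨i, h1, h2, h3⟩ := hmid
        exact ih i (by omega) h2 h3
      · push_neg at hmid
        have hlast : ∀ i, j < i → i < k → (rotorState ρ0 b i).2 ≠ (rotorState ρ0 b j).2 := by
          intro i hi1 hi2 hcon
          exact hmid i hi1 hi2 (hcon.trans hje)
        have h1 := rotor_last_exit ρ0 b k hjk hlast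
        rw [hje] at h1
        rw [h1]
        have hc := confine (x := fun n => (rotorState ρ0 b n).2)
          (fun i => step_pm ρ0 b hρ hb i) hjk hje
          (fun i hi1 hi2 => fun hcon => hmid i hi1 hi2 (hcon.trans hje))
        omega
  exact this (k - j) j (le_refl _) hjk hje

end Rotor


/-! ### Locality: the path up to time `k` only depends on `b` below `k` and on the
initial rotors at previously visited sites. -/

section Locality

lemma locality (ρ0 ρ0' : ℤ → ℤ) (b b' : ℕ → ℤ) (k : ℕ)
    (hbb : ∀ j, j < k → b j = b' j)
    (hρρ : ∀ y, (∃ j, j < k ∧ (rotorState ρ0 b j).2 = y) → ρ0 y = ρ0' y) :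
    ∀ j, j ≤ k → (rotorState ρ0' b' j).2 = (rotorState ρ0 b j).2 ∧
      ∀ y, ((∃ i, i < j ∧ (rotorState ρ0 b i).2 = y) ∨ ρ0 y = ρ0' y) →
        (rotorState ρ0' b' j).1 y = (rotorState ρ0 b j).1 y := by
  intro j
  induction j with
  | zero =>
    intro _
    refine ⟨rfl, fun y hy => ?_⟩
    rcases hy with ⟨i, hi, _⟩ | h
    · omega
    · exact h.symm
  | succ j ih =>
    intro hj
    obtain ⟨hpos, hrot⟩ := ih (le_trans (Nat.le_succ j) hj)
    have hrotj : (rotorState ρ0' b' j).1 ((rotorState ρ0 b j).2) =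
        (rotorState ρ0 b j).1 ((rotorState ρ0 b j).2) := by
      apply hrot
      by_cases hvis : ∃ i, i < j ∧ (rotorState ρ0 b i).2 = (rotorState ρ0 b j).2
      · exact Or.inl hvis
      · exact Or.inr (hρρ _ ⟨j, by omega, rfl⟩)
    have hb' : b j = b' j := hbb j (by omega)
    constructor
    · rw [pos_succ, pos_succ, hpos, hrotj, hb']
    · intro y hy
      rw [rotor_succ, rotor_succ, hpos]
      rcases eq_or_ne (rotorState ρ0 b j).2 y with h | h
      · rw [h, Function.update_self, Function.update_self, hb']
        rw [h] at hrotj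
        rw [hrotj]
      · rw [Function.update_of_ne (Ne.symm h), Function.update_of_ne (Ne.symm h)]
        apply hrot
        rcases hy with ⟨i, hi, hie⟩ | h'
        · rcases Nat.lt_or_ge i j with h'' | h''
          · exact Or.inl ⟨i, h'', hie⟩
          · have : i = j := by omega
            subst this
            exact absurd hie h
        · exact Or.inr h'

lemma locality_pos (ρ0 ρ0' : ℤ → ℤ) (b b' : ℕ → ℤ) (k : ℕ)
    (hbb : ∀ j, j < k → b j = b' j)
    (hρρ : ∀ y, (∃ j, j < k ∧ (rotorState ρ0 b j).2 = y) → ρ0 y = ρ0' y) :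
    ∀ j, j ≤ k → rotorWalk ρ0' b' j = rotorWalk ρ0 b j := by
  intro j hj
  exact (locality ρ0 ρ0' b b' k hbb hρρ j hj).1

/-- Position bound: `|X_j| ≤ j`. -/
lemma pos_abs_le (ρ0 : ℤ → ℤ) (b : ℕ → ℤ)
    (hρ : ∀ y, ρ0 y = 1 ∨ ρ0 y = -1) (hb : ∀ n, b n = 1 ∨ b n = -1) :
    ∀ n, |(rotorState ρ0 b n).2| ≤ (n : ℤ) := by
  intro n
  induction n with
  | zero => simp [pos_zero]
  | succ n ih =>
    have := step_pm ρ0 b hρ hb n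
    have h2 := abs_le.1 ih
    rw [Nat.cast_succ, abs_le]
    rcases this with h | h <;> omega

end Locality

/-! ### The compensator value -/

open Classical in
/-- The (deterministic) value of `E[Δ_k | F_k] / (2p-1)` along a given path. -/
noncomputable def cVal (α β : ℝ) (x : ℕ → ℤ) (k : ℕ) : ℝ :=
  if ∃ j, j < k ∧ x j = x k then ((x (k - 1) - x k : ℤ) : ℝ)
  else if 0 < x k then 2 * α - 1 else if x k < 0 then 1 - 2 * β else 0

section SumIdentity

variable {x : ℕ → ℤ} (h0 : x 0 = 0)
  (hstep : ∀ i, x (i + 1) - x i = 1 ∨ x (i + 1) - x i = -1)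

include h0 hstep

lemma runMaxZ_nonneg (n : ℕ) : 0 ≤ runMaxZ x n := h0 ▸ le_runMaxZ x (Nat.zero_le n)

lemma runMinZ_nonpos (n : ℕ) : runMinZ x n ≤ 0 := h0 ▸ runMinZ_le x (Nat.zero_le n)

/-- The key combinatorial identity: the sum of the compensator values telescopes
to a combination of the running max, running min and current position. -/
lemma sum_cVal (α β : ℝ) :
    ∀ n, ∑ k ∈ range (n + 1), cVal α β x k =
      2 * α * (runMaxZ x n : ℝ) + 2 * β * (runMinZ x n : ℝ) - (x n : ℝ) := by
  intro n
  induction n with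
  | zero =>
    rw [range_one, sum_singleton, runMaxZ_zero, runMinZ_zero, h0]
    have : ¬ ∃ j, j < 0 ∧ x j = x 0 := by
      rintro ⟨j, hj, _⟩; omega
    rw [cVal, if_neg this, h0]
    norm_num
  | succ n ih =>
    rw [range_add_one, sum_insert (by simp), ih, runMaxZ_succ, runMinZ_succ]
    by_cases hrev : ∃ j, j < n + 1 ∧ x j = x (n + 1)
    · -- revisit: max and min do not change
      obtain ⟨j, hj, hje⟩ := hrev
      have hmax : max (runMaxZ x n) (x (n + 1)) = runMaxZ x n :=
        max_eq_left (hje ▸ le_runMaxZ x (Nat.lt_succ_iff.1 hj))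
      have hmin : min (runMinZ x n) (x (n + 1)) = runMinZ x n :=
        min_eq_left (hje ▸ runMinZ_le x (Nat.lt_succ_iff.1 hj))
      rw [hmax, hmin, cVal, if_pos ⟨j, hj, hje⟩]
      have : n + 1 - 1 = n := by omega
      rw [this]
      push_cast
      ring
    · -- fresh: new max or new min
      push_neg at hrev
      have hfresh : x (n + 1) > runMaxZ x n ∨ x (n + 1) < runMinZ x n := by
        by_contra hcon
        push_neg at hcon
        obtain ⟨hle, hge⟩ := hcon
        obtain ⟨j, hj, hje⟩ := visits_interval hstep n (x (n + 1)) hge hle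
        exact hrev j (Nat.lt_succ_of_le hj) hje
      have hM := le_runMaxZ x (le_refl n)
      have hm := runMinZ_le x (le_refl n)
      have hs := hstep n
      have hMnn := runMaxZ_nonneg h0 hstep n
      have hmnp := runMinZ_nonpos h0 hstep n
      rcases hfresh with hf | hf
      · -- new max
        have hx1 : x (n + 1) = runMaxZ x n + 1 := by rcases hs with h | h <;> omega
        have hxn : x n = runMaxZ x n := by rcases hs with h | h <;> omega
        have hmax : max (runMaxZ x n) (x (n + 1)) = x (n + 1) := by omega
        have hmin : min (runMinZ x n) (x (n + 1)) = runMinZ x n := by omega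
        have hpos : 0 < x (n + 1) := by omega
        rw [hmax, hmin, cVal, if_neg (by rintro ⟨j, hj, hje⟩; exact hrev j hj hje), if_pos hpos]
        rw [hx1, hxn]
        push_cast
        ring
      · -- new min
        have hx1 : x (n + 1) = runMinZ x n - 1 := by rcases hs with h | h <;> omega
        have hxn : x n = runMinZ x n := by rcases hs with h | h <;> omega
        have hmax : max (runMaxZ x n) (x (n + 1)) = runMaxZ x n := by omega
        have hmin : min (runMinZ x n) (x (n + 1)) = x (n + 1) := by omega
        have hneg : x (n + 1) < 0 := by omega
        have hnpos : ¬ (0 < x (n + 1)) := by omega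
        rw [hmax, hmin, cVal, if_neg (by rintro ⟨j, hj, hje⟩; exact hrev j hj hje),
          if_neg hnpos, if_pos hneg]
        rw [hx1, hxn]
        push_cast
        ring

end SumIdentity


/-! ### Measurability -/

section Prob

variable {Ω : Type*} [m0 : MeasurableSpace Ω]

lemma measurable_apply_countable {g : ℤ → Ω → ℤ} (hg : ∀ y, Measurable (g y))
    {h : Ω → ℤ} (hh : Measurable h) : Measurable fun ω => g (h ω) ω := by
  apply measurable_to_countable'
  intro z
  have heq : (fun ω => g (h ω) ω) ⁻¹' {z} = ⋃ y : ℤ, (h ⁻¹' {y}) ∩ (g y ⁻¹' {z}) := by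
    ext ω
    simp only [Set.mem_preimage, Set.mem_singleton_iff, Set.mem_iUnion, Set.mem_inter_iff]
    constructor
    · intro hz; exact ⟨h ω, rfl, hz⟩
    · rintro ⟨y, hy, hz⟩; rw [hy]; exact hz
  rw [heq]
  exact MeasurableSet.iUnion fun y =>
    (hh (measurableSet_singleton y)).inter (hg y (measurableSet_singleton z))

variable (B : ℕ → Ω → ℤ) (ρ0 : Ω → ℤ → ℤ)

lemma meas_state (hBmeas : ∀ n, Measurable (B n))
    (hρmeas : ∀ x, Measurable fun ω => ρ0 ω x) :
    ∀ n, Measurable (fun ω => (rotorState (ρ0 ω) (fun j => B j ω) n).2) ∧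
      ∀ y, Measurable (fun ω => (rotorState (ρ0 ω) (fun j => B j ω) n).1 y) := by
  intro n
  induction n with
  | zero => exact ⟨measurable_const, hρmeas⟩
  | succ n ih =>
    obtain ⟨hpos, hrot⟩ := ih
    have hread : Measurable (fun ω =>
        (rotorState (ρ0 ω) (fun j => B j ω) n).1 ((rotorState (ρ0 ω) (fun j => B j ω) n).2)) :=
      measurable_apply_countable hrot hpos
    constructor
    · have heq : (fun ω => (rotorState (ρ0 ω) (fun j => B j ω) (n + 1)).2) =
          fun ω => (rotorState (ρ0 ω) (fun j => B j ω) n).2 +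
            B n ω * (rotorState (ρ0 ω) (fun j => B j ω) n).1
              ((rotorState (ρ0 ω) (fun j => B j ω) n).2) := by
        funext ω; rw [pos_succ]
      rw [heq]
      exact hpos.add ((hBmeas n).mul hread)
    · intro y
      have heq : (fun ω => (rotorState (ρ0 ω) (fun j => B j ω) (n + 1)).1 y) =
          fun ω => if y = (rotorState (ρ0 ω) (fun j => B j ω) n).2 then
              B n ω * (rotorState (ρ0 ω) (fun j => B j ω) n).1
                ((rotorState (ρ0 ω) (fun j => B j ω) n).2)
            else (rotorState (ρ0 ω) (fun j => B j ω) n).1 y := by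
        funext ω; rw [rotor_succ, Function.update_apply]
      rw [heq]
      have hcond : MeasurableSet {ω | y = (rotorState (ρ0 ω) (fun j => B j ω) n).2} := by
        have : {ω | y = (rotorState (ρ0 ω) (fun j => B j ω) n).2} =
            (fun ω => (rotorState (ρ0 ω) (fun j => B j ω) n).2) ⁻¹' {y} := by
          ext ω; simp [eq_comm]
        rw [this]
        exact hpos (measurableSet_singleton y)
      exact Measurable.ite hcond ((hBmeas n).mul hread) (hrot y)

/-- Congruence for `cVal`. -/
lemma cVal_congr (α β : ℝ) {x x' : ℕ → ℤ} {k : ℕ} (h : ∀ j, j ≤ k → x j = x' j) :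
    cVal α β x k = cVal α β x' k := by
  have hk : x k = x' k := h k (le_refl k)
  have hk1 : x (k - 1) = x' (k - 1) := h (k - 1) (Nat.sub_le k 1)
  have hex : (∃ j, j < k ∧ x j = x k) ↔ (∃ j, j < k ∧ x' j = x' k) := by
    constructor
    · rintro ⟨j, hj, hje⟩; exact ⟨j, hj, (h j (le_of_lt hj)).symm.trans (hje.trans hk)⟩
    · rintro ⟨j, hj, hje⟩; exact ⟨j, hj, (h j (le_of_lt hj)).trans (hje.trans hk.symm)⟩
  unfold cVal
  by_cases hc : ∃ j, j < k ∧ x j = x k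
  · rw [if_pos hc, if_pos (hex.1 hc), hk, hk1]
  · rw [if_neg hc, if_neg (fun hc' => hc (hex.2 hc')), hk]

/-- `cVal` is bounded by 1 along a nearest-neighbour path. -/
lemma cVal_abs_le {α β : ℝ} (hα : α ∈ Set.Icc (0:ℝ) 1) (hβ : β ∈ Set.Icc (0:ℝ) 1)
    {x : ℕ → ℤ} (hstep : ∀ i, x (i + 1) - x i = 1 ∨ x (i + 1) - x i = -1) (k : ℕ) :
    |cVal α β x k| ≤ 1 := by
  obtain ⟨hα0, hα1⟩ := hα
  obtain ⟨hβ0, hβ1⟩ := hβ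
  unfold cVal
  by_cases hc : ∃ j, j < k ∧ x j = x k
  · rw [if_pos hc]
    obtain ⟨j, hj, -⟩ := hc
    have hk : k - 1 + 1 = k := by omega
    have := hstep (k - 1)
    rw [hk] at this
    rw [abs_le]
    constructor <;> rw [← Int.cast_one (R := ℝ)] <;>
      first
      | · rw [← Int.cast_neg, Int.cast_le]
          omega
      | · rw [Int.cast_le]
          omega
  · rw [if_neg hc]
    split_ifs <;> rw [abs_le] <;> constructor <;> linarith

/-- The natural filtration at time `k` is generated by the tuple of positions up to `k`. -/
lemma F_eq_comap (X : ℕ → Ω → ℤ) (k : ℕ) :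
    (⨆ j ∈ range (k + 1), MeasurableSpace.comap (X j) ⊤) =
      MeasurableSpace.comap (fun ω (j : Fin (k + 1)) => X j ω) ⊤ := by
  apply le_antisymm
  · apply iSup₂_le
    intro j hj
    have hj' : j < k + 1 := mem_range.1 hj
    have hcomp : X j = (fun v : Fin (k + 1) → ℤ => v ⟨j, hj'⟩) ∘
        (fun ω (i : Fin (k + 1)) => X i ω) := rfl
    rw [hcomp, ← MeasurableSpace.comap_comp]
    exact MeasurableSpace.comap_mono le_top
  · intro s hs
    obtain ⟨S, -, rfl⟩ := hs
    have huni : (fun ω (j : Fin (k + 1)) => X j ω) ⁻¹' S =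
        ⋃ w ∈ S, ⋂ j : Fin (k + 1), X j ⁻¹' {w j} := by
      ext ω
      simp only [Set.mem_preimage, Set.mem_iUnion, Set.mem_iInter, Set.mem_singleton_iff]
      constructor
      · intro h; exact ⟨_, h, fun j => rfl⟩
      · rintro ⟨w, hw, h⟩
        have : (fun j : Fin (k + 1) => X j ω) = w := funext h
        rw [this]; exact hw
    rw [huni]
    apply MeasurableSet.biUnion (Set.to_countable S)
    intro w _
    apply MeasurableSet.iInter
    intro j
    have hmem : MeasurableSet[MeasurableSpace.comap (X (j : ℕ)) ⊤] (X (j : ℕ) ⁻¹' {w j}) :=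
      ⟨{w j}, trivial, rfl⟩
    have hle : MeasurableSpace.comap (X (j : ℕ)) ⊤ ≤
        ⨆ i ∈ range (k + 1), MeasurableSpace.comap (X i) ⊤ := by
      apply le_iSup₂ (f := fun (i : ℕ) (_ : i ∈ range (k + 1)) => MeasurableSpace.comap (X i) ⊤)
        (j : ℕ) (mem_range.2 j.2)
    exact hle _ hmem

/-- Splitting a set integral along the values of a `±1`-valued variable. -/
lemma setIntegral_split (μ : Measure Ω) {A : Set Ω} (hA : MeasurableSet A)
    {g : Ω → ℤ} (hg : Measurable g) (hval : ∀ ω, g ω = 1 ∨ g ω = -1)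
    {f : Ω → ℝ} (hf : Integrable f μ) :
    ∫ ω in A, f ω ∂μ =
      ∫ ω in A ∩ {ω | g ω = 1}, f ω ∂μ + ∫ ω in A ∩ {ω | g ω = -1}, f ω ∂μ := by
  have hg1 : MeasurableSet {ω | g ω = 1} := hg (measurableSet_singleton 1)
  have hg2 : MeasurableSet {ω | g ω = -1} := hg (measurableSet_singleton (-1))
  have hdisj : Disjoint (A ∩ {ω | g ω = 1}) (A ∩ {ω | g ω = -1}) := by
    rw [Set.disjoint_left]
    rintro ω ⟨-, h1⟩ ⟨-, h2⟩
    simp only [Set.mem_setOf_eq] at h1 h2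
    omega
  have hcover : A = (A ∩ {ω | g ω = 1}) ∪ (A ∩ {ω | g ω = -1}) := by
    ext ω
    simp only [Set.mem_union, Set.mem_inter_iff, Set.mem_setOf_eq]
    constructor
    · intro h; rcases hval ω with h1 | h1
      · exact Or.inl ⟨h, h1⟩
      · exact Or.inr ⟨h, h1⟩
    · rintro (⟨h, -⟩ | ⟨h, -⟩) <;> exact h
  conv_lhs => rw [hcover]
  exact setIntegral_union hdisj (hA.inter hg2) hf.integrableOn hf.integrableOn

lemma setIntegral_eq_const (μ : Measure Ω) {A : Set Ω} (hA : MeasurableSet A)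
    {f : Ω → ℝ} {c : ℝ} (h : ∀ ω ∈ A, f ω = c) :
    ∫ ω in A, f ω ∂μ = (μ A).toReal * c := by
  rw [setIntegral_congr_fun hA h, setIntegral_const, smul_eq_mul, Measure.real]


section Indep

variable {Ω : Type*} [m0 : MeasurableSpace Ω] {μ : Measure Ω}

/-- If the event `A` is determined by coordinates in `T3`, then it is independent of any
event expressed through coordinates in a disjoint finite set `T`. -/
lemma indep_of_det {ι : Type*} [DecidableEq ι] {f : ι → Ω → ℤ}
    (hindep : iIndepFun f μ) (hfmeas : ∀ i, Measurable (f i))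
    (T3 T : Finset ι) (hdisj : Disjoint T3 T) {A : Set Ω}
    (hdet : ∀ ω ω', (∀ i ∈ T3, f i ω = f i ω') → ω' ∈ A → ω ∈ A)
    (U : Set ((i : T) → ℤ)) :
    μ (A ∩ (fun ω (i : T) => f (i : ι) ω) ⁻¹' U) =
      μ A * μ ((fun ω (i : T) => f (i : ι) ω) ⁻¹' U) := by
  classical
  have hind := hindep.indepFun_finset T3 T hdisj hfmeas
  have hAeq : A = (fun ω (i : T3) => f (i : ι) ω) ⁻¹'
      ((fun ω (i : T3) => f (i : ι) ω) '' A) := by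
    ext ω
    constructor
    · intro h; exact ⟨ω, h, rfl⟩
    · rintro ⟨ω', hω', heq⟩
      exact hdet ω ω' (fun i hi => (congrFun heq ⟨i, hi⟩).symm) hω'
  conv_lhs => rw [hAeq]
  conv_rhs => rw [hAeq]
  exact hind.measure_inter_preimage_eq_mul _ _
    (Set.Countable.measurableSet (Set.to_countable _))
    (Set.Countable.measurableSet (Set.to_countable _))

end Indep

section Laws

variable {Ω : Type*} [m0 : MeasurableSpace Ω] {μ : Measure Ω} [IsProbabilityMeasure μ]

/-- The law of the complementary value of a `±1`-valued random variable. -/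
lemma law_neg {g : Ω → ℤ} (hg : Measurable g) (hval : ∀ ω, g ω = 1 ∨ g ω = -1)
    {q : ℝ} (hq0 : 0 ≤ q) (hq1 : q ≤ 1) (hlaw : μ {ω | g ω = 1} = ENNReal.ofReal q) :
    μ {ω | g ω = -1} = ENNReal.ofReal (1 - q) := by
  have hcompl : {ω | g ω = -1} = {ω | g ω = 1}ᶜ := by
    ext ω
    simp only [Set.mem_setOf_eq, Set.mem_compl_iff]
    rcases hval ω with h | h <;> rw [h] <;> norm_num
  rw [hcompl, measure_compl (s := {ω | g ω = 1}) (hg (measurableSet_singleton 1)) (measure_ne_top μ _), hlaw,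
    measure_univ, ENNReal.ofReal_sub _ hq0, ENNReal.ofReal_one]

lemma law_neg' {g : Ω → ℤ} (hg : Measurable g) (hval : ∀ ω, g ω = 1 ∨ g ω = -1)
    {q : ℝ} (hq0 : 0 ≤ q) (hq1 : q ≤ 1) (hlaw : μ {ω | g ω = -1} = ENNReal.ofReal q) :
    μ {ω | g ω = 1} = ENNReal.ofReal (1 - q) := by
  have hcompl : {ω | g ω = 1} = {ω | g ω = -1}ᶜ := by
    ext ω
    simp only [Set.mem_setOf_eq, Set.mem_compl_iff]
    rcases hval ω with h | h <;> rw [h] <;> norm_num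
  rw [hcompl, measure_compl (s := {ω | g ω = -1}) (hg (measurableSet_singleton (-1))) (measure_ne_top μ _), hlaw,
    measure_univ, ENNReal.ofReal_sub _ hq0, ENNReal.ofReal_one]

end Laws


section CondExp

variable {Ω : Type*} [m0 : MeasurableSpace Ω]

lemma condexp_delta (μ : Measure Ω)
    [IsProbabilityMeasure μ] (p α β : ℝ) (hp : p ∈ Set.Ioo (0 : ℝ) 1)
    (hα : α ∈ Set.Icc (0 : ℝ) 1) (hβ : β ∈ Set.Icc (0 : ℝ) 1)
    (B : ℕ → Ω → ℤ) (ρ0 : Ω → ℤ → ℤ)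
    (hBmeas : ∀ n, Measurable (B n)) (hρmeas : ∀ x, Measurable fun ω => ρ0 ω x)
    (hBval : ∀ n ω, B n ω = 1 ∨ B n ω = -1)
    (hBlaw : ∀ n, μ {ω | B n ω = 1} = ENNReal.ofReal p)
    (hρval : ∀ x ω, ρ0 ω x = 1 ∨ ρ0 ω x = -1)
    (hρpos : ∀ x : ℤ, 0 < x → μ {ω | ρ0 ω x = 1} = ENNReal.ofReal α)
    (hρneg : ∀ x : ℤ, x < 0 → μ {ω | ρ0 ω x = -1} = ENNReal.ofReal β)
    (hρzero : μ {ω | ρ0 ω 0 = 1} = 1 / 2)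
    (hindep : iIndepFun
      (Sum.elim B (fun x ω => ρ0 ω x) : ℕ ⊕ ℤ → Ω → ℤ) μ)
    (X : ℕ → Ω → ℤ) (hX : ∀ n ω, X n ω = rotorWalk (ρ0 ω) (fun k => B k ω) n)
    (F : ℕ → MeasurableSpace Ω)
    (hFdef : ∀ n, F n = ⨆ k ∈ range (n + 1), MeasurableSpace.comap (X k) ⊤)
    (Δ : ℕ → Ω → ℝ) (hΔ : ∀ k ω, Δ k ω = ((X (k + 1) ω - X k ω : ℤ) : ℝ)) (k : ℕ) :
    μ[Δ k | F k] =ᵐ[μ] fun ω => (2 * p - 1) * cVal α β (fun j => X j ω) k := by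
  classical
  obtain ⟨hp0, hp1⟩ := hp
  have hXdef : ∀ n ω, X n ω = (rotorState (ρ0 ω) (fun j => B j ω) n).2 := fun n ω => hX n ω
  have hXmeas : ∀ n, Measurable (X n) := by
    intro n
    have h1 := (meas_state B ρ0 hBmeas hρmeas n).1
    have h2 : X n = fun ω => (rotorState (ρ0 ω) (fun j => B j ω) n).2 :=
      funext fun ω => hXdef n ω
    rw [h2]; exact h1
  have hstepω : ∀ ω i, X (i + 1) ω - X i ω = 1 ∨ X (i + 1) ω - X i ω = -1 := by
    intro ω i
    rw [hXdef, hXdef]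
    exact step_pm _ _ (fun y => hρval y ω) (fun n => hBval n ω) i
  have habs : ∀ ω j, |X j ω| ≤ (j : ℤ) := by
    intro ω j
    rw [hXdef]
    exact pos_abs_le _ _ (fun y => hρval y ω) (fun n => hBval n ω) j
  have hΔform : ∀ ω, Δ k ω = ((B k ω * (rotorState (ρ0 ω) (fun j => B j ω) k).1
      ((rotorState (ρ0 ω) (fun j => B j ω) k).2) : ℤ) : ℝ) := by
    intro ω
    rw [hΔ, hXdef, hXdef, pos_succ]
    push_cast
    ring
  set t : Ω → (Fin (k + 1) → ℤ) := fun ω j => X j ω with ht_def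
  have htmeas : Measurable t := measurable_pi_lambda _ fun j => hXmeas j
  have hFeq : F k = MeasurableSpace.comap t ⊤ := by rw [hFdef k, F_eq_comap]
  have hm : F k ≤ m0 := by
    rw [hFeq]
    rintro s ⟨S, -, rfl⟩
    exact htmeas (Set.Countable.measurableSet (Set.to_countable S))
  haveI hfin : IsFiniteMeasure (μ.trim hm) :=
    ⟨by rw [trim_measurableSet_eq hm MeasurableSet.univ]; exact measure_lt_top μ _⟩
  set g : Ω → ℝ := fun ω => (2 * p - 1) * cVal α β (fun j => X j ω) k with hg_def
  have hgFmeas : Measurable[F k] g := by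
    have htF : Measurable[F k] t := by
      rw [hFeq]
      exact fun S _ => ⟨S, trivial, rfl⟩
    have hgcomp : g = (fun v : Fin (k + 1) → ℤ =>
        (2 * p - 1) * cVal α β (fun j => if h : j < k + 1 then v ⟨j, h⟩ else 0) k) ∘ t := by
      funext ω
      simp only [Function.comp_apply, hg_def]
      congr 1
      apply cVal_congr
      intro j hj
      rw [dif_pos (Nat.lt_succ_of_le hj)]
    rw [hgcomp]
    exact (measurable_of_countable _).comp htF
  have hgm : AEStronglyMeasurable[F k] g μ :=
    StronglyMeasurable.aestronglyMeasurable (Measurable.stronglyMeasurable hgFmeas)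
  have hΔmeas : Measurable (Δ k) := by
    have h2 : Δ k = (fun z : ℤ => (z : ℝ)) ∘ (fun ω => X (k + 1) ω - X k ω) :=
      funext fun ω => hΔ k ω
    rw [h2]
    exact (measurable_of_countable _).comp ((hXmeas (k + 1)).sub (hXmeas k))
  have hΔint : Integrable (Δ k) μ := by
    refine (integrable_const (1 : ℝ)).mono' hΔmeas.aestronglyMeasurable
      (ae_of_all _ fun ω => ?_)
    rw [hΔ, Real.norm_eq_abs]
    rcases hstepω ω k with h | h <;> rw [h] <;> norm_num
  have hgmeas0 : Measurable g := hgFmeas.mono hm le_rfl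
  have hgint : Integrable g μ := by
    refine (integrable_const (1 : ℝ)).mono' hgmeas0.aestronglyMeasurable
      (ae_of_all _ fun ω => ?_)
    rw [Real.norm_eq_abs]
    simp only [hg_def]
    rw [abs_mul]
    have h1 : |2 * p - 1| ≤ 1 := by rw [abs_le]; constructor <;> linarith
    have h2 := cVal_abs_le hα hβ (x := fun j => X j ω) (hstepω ω) k
    calc |2 * p - 1| * |cVal α β (fun j => X j ω) k| ≤ 1 * 1 :=
          mul_le_mul h1 h2 (abs_nonneg _) zero_le_one
      _ = 1 := by norm_num
  -- the integrable ±1 variables we will use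
  have hBint : Integrable (fun ω => ((B k ω : ℤ) : ℝ)) μ := by
    refine (integrable_const (1 : ℝ)).mono'
      ((measurable_of_countable _).comp (hBmeas k)).aestronglyMeasurable
      (ae_of_all _ fun ω => ?_)
    rw [Real.norm_eq_abs]
    rcases hBval k ω with h | h <;> rw [h] <;> norm_num
  -- per-atom computation
  have hatom : ∀ w : Fin (k + 1) → ℤ,
      ∫ ω in t ⁻¹' {w}, g ω ∂μ = ∫ ω in t ⁻¹' {w}, Δ k ω ∂μ := by
    intro w
    by_cases hA0 : t ⁻¹' {w} = ∅
    · rw [hA0]; simp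
    obtain ⟨ω₀, hω₀⟩ := Set.nonempty_iff_ne_empty.2 hA0
    set A := t ⁻¹' {w} with hA_def
    have hAmeas : MeasurableSet A := htmeas (measurableSet_singleton w)
    set x : ℕ → ℤ := fun j => X j ω₀ with hx_def
    have hw0 : t ω₀ = w := hω₀
    have hmemA : ∀ ω, ω ∈ A ↔ ∀ j, j ≤ k → X j ω = x j := by
      intro ω
      constructor
      · intro h j hj
        have h0 : t ω = w := h
        exact congrFun (h0.trans hw0.symm) ⟨j, Nat.lt_succ_of_le hj⟩
      · intro h
        show t ω ∈ ({w} : Set _)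
        rw [Set.mem_singleton_iff, ← hw0]
        funext j
        exact h j (Nat.lt_succ_iff.1 j.2)
    have hxstep : ∀ i, x (i + 1) - x i = 1 ∨ x (i + 1) - x i = -1 := hstepω ω₀
    have hxabs : ∀ j, |x j| ≤ (j : ℤ) := habs ω₀
    have hgA : ∀ ω ∈ A, g ω = (2 * p - 1) * cVal α β x k := by
      intro ω hω
      simp only [hg_def]
      congr 1
      exact cVal_congr α β (fun j hj => (hmemA ω).1 hω j hj)
    rw [setIntegral_eq_const μ hAmeas hgA]
    -- independence setup
    set f : ℕ ⊕ ℤ → Ω → ℤ := Sum.elim B (fun x ω => ρ0 ω x) with hf_def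
    have hfmeas : ∀ i, Measurable (f i) := by
      intro i
      cases i with
      | inl n => exact hBmeas n
      | inr y => exact hρmeas y
    have hdetE : ∀ (E : Finset ℤ), (∀ j, j < k → x j ∈ E) →
        ∀ ω ω', (∀ i ∈ ((range k).image Sum.inl ∪ E.image Sum.inr : Finset (ℕ ⊕ ℤ)),
          f i ω = f i ω') → ω' ∈ A → ω ∈ A := by
      intro E hE ω ω' hagree hω'
      have hB' : ∀ j, j < k → B j ω' = B j ω := by
        intro j hj
        have h := hagree (Sum.inl j) (by
          rw [mem_union]
          exact Or.inl (mem_image_of_mem _ (mem_range.2 hj)))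
        exact h.symm
      have hρ' : ∀ y, (∃ j, j < k ∧ (rotorState (ρ0 ω') (fun i => B i ω') j).2 = y) →
          ρ0 ω' y = ρ0 ω y := by
        rintro y ⟨j, hj, hje⟩
        have hXj : X j ω' = x j := (hmemA ω').1 hω' j (le_of_lt hj)
        have hy : y = x j := by rw [← hje, ← hXdef, hXj]
        subst hy
        have h := hagree (Sum.inr (x j)) (by
          rw [mem_union]
          exact Or.inr (mem_image_of_mem _ (hE j hj)))
        exact h.symm
      have hloc := locality_pos (ρ0 ω') (ρ0 ω) (fun i => B i ω') (fun i => B i ω) k hB' hρ'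
      rw [hmemA]
      intro j hj
      rw [hX j ω, hloc j hj, ← hX j ω']
      exact (hmemA ω').1 hω' j hj
    have hindA : ∀ (E : Finset ℤ), (∀ j, j < k → x j ∈ E) →
        ∀ (T : Finset (ℕ ⊕ ℤ)), Disjoint ((range k).image Sum.inl ∪ E.image Sum.inr) T →
        ∀ (U : Set ((i : T) → ℤ)),
          μ (A ∩ (fun ω (i : T) => f (i : ℕ ⊕ ℤ) ω) ⁻¹' U) =
            μ A * μ ((fun ω (i : T) => f (i : ℕ ⊕ ℤ) ω) ⁻¹' U) :=
      fun E hE T hT U => indep_of_det hindep hfmeas _ T hT (hdetE E hE) U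
    by_cases hrev : ∃ j, j < k ∧ x j = x k
    · -- revisit case
      set E : Finset ℤ := Finset.Icc (-(k : ℤ)) k with hE_def
      have hE : ∀ j, j < k → x j ∈ E := by
        intro j hj
        have := hxabs j
        rw [hE_def, mem_Icc, ← abs_le]
        calc |x j| ≤ (j : ℤ) := this
          _ ≤ k := by exact_mod_cast le_of_lt hj
      set T : Finset (ℕ ⊕ ℤ) := {Sum.inl k} with hT_def
      have hTdisj : Disjoint ((range k).image Sum.inl ∪ E.image Sum.inr) T := by
        rw [Finset.disjoint_right]
        intro i hi
        rw [hT_def, mem_singleton] at hi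
        subst hi
        rw [mem_union]
        rintro (h | h)
        · obtain ⟨a, ha, hae⟩ := mem_image.1 h
          rw [Sum.inl.injEq] at hae
          rw [mem_range] at ha
          omega
        · obtain ⟨a, ha, hae⟩ := mem_image.1 h
          simp at hae
      have hBs : ∀ s : ℤ, μ (A ∩ {ω | B k ω = s}) = μ A * μ {ω | B k ω = s} := by
        intro s
        have hU := hindA E hE T hTdisj
          {v : (i : T) → ℤ | v ⟨Sum.inl k, mem_singleton_self _⟩ = s}
        have hpre : (fun ω (i : T) => f (i : ℕ ⊕ ℤ) ω) ⁻¹'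
            {v : (i : T) → ℤ | v ⟨Sum.inl k, mem_singleton_self _⟩ = s} =
            {ω | B k ω = s} := rfl
        rw [hpre] at hU
        exact hU
      -- the integrand on A
      have hΔA : ∀ ω ∈ A, Δ k ω = ((x (k - 1) - x k : ℤ) : ℝ) * ((B k ω : ℤ) : ℝ) := by
        intro ω hω
        have hmem := (hmemA ω).1 hω
        have hrevω : ∃ j, j < k ∧ (rotorState (ρ0 ω) (fun i => B i ω) j).2 =
            (rotorState (ρ0 ω) (fun i => B i ω) k).2 := by
          obtain ⟨j, hj, hje⟩ := hrev
          refine ⟨j, hj, ?_⟩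
          rw [← hXdef, ← hXdef, hmem j (le_of_lt hj), hmem k (le_refl k), hje]
        have hrot := rotor_revisit (ρ0 ω) (fun i => B i ω)
          (fun y => hρval y ω) (fun n => hBval n ω) hrevω
        rw [hΔform ω, hrot, ← hXdef, ← hXdef, hmem (k - 1) (Nat.sub_le k 1),
          hmem k (le_refl k)]
        push_cast
        ring
      have hms1 : MeasurableSet {ω | B k ω = 1} := hBmeas k (measurableSet_singleton 1)
      have hmsm1 : MeasurableSet {ω | B k ω = -1} := hBmeas k (measurableSet_singleton (-1))
      rw [setIntegral_congr_fun hAmeas hΔA, integral_const_mul,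
        setIntegral_split μ hAmeas (hBmeas k) (hBval k) hBint,
        setIntegral_eq_const μ (hAmeas.inter hms1)
          (fun ω hω => by rw [show B k ω = 1 from hω.2]),
        setIntegral_eq_const μ (hAmeas.inter hmsm1)
          (fun ω hω => by rw [show B k ω = -1 from hω.2]),
        hBs 1, hBs (-1), hBlaw k,
        law_neg (hBmeas k) (hBval k) (le_of_lt hp0) (le_of_lt hp1) (hBlaw k)]
      rw [ENNReal.toReal_mul, ENNReal.toReal_mul,
        ENNReal.toReal_ofReal (le_of_lt hp0), ENNReal.toReal_ofReal (by linarith)]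
      unfold cVal
      rw [if_pos hrev]
      ring
    · -- fresh case
      push_neg at hrev
      set E : Finset ℤ := (Finset.Icc (-(k : ℤ)) k).erase (x k) with hE_def
      have hE : ∀ j, j < k → x j ∈ E := by
        intro j hj
        rw [hE_def, mem_erase]
        refine ⟨hrev j hj, ?_⟩
        have := hxabs j
        rw [mem_Icc, ← abs_le]
        calc |x j| ≤ (j : ℤ) := this
          _ ≤ k := by exact_mod_cast le_of_lt hj
      set T : Finset (ℕ ⊕ ℤ) := {Sum.inl k, Sum.inr (x k)} with hT_def
      have hTdisj : Disjoint ((range k).image Sum.inl ∪ E.image Sum.inr) T := by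
        rw [Finset.disjoint_right]
        intro i hi
        rw [hT_def, mem_insert, mem_singleton] at hi
        rw [mem_union]
        rcases hi with hi | hi <;> subst hi <;> rintro (h | h)
        · obtain ⟨a, ha, hae⟩ := mem_image.1 h
          rw [Sum.inl.injEq] at hae
          rw [mem_range] at ha
          omega
        · obtain ⟨a, ha, hae⟩ := mem_image.1 h
          simp at hae
        · obtain ⟨a, ha, hae⟩ := mem_image.1 h
          simp at hae
        · obtain ⟨a, ha, hae⟩ := mem_image.1 h
          rw [Sum.inr.injEq] at hae
          subst hae
          exact (mem_erase.1 ha).1 rfl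
      have hi1 : Sum.inl k ∈ T := by rw [hT_def]; exact mem_insert_self _ _
      have hi2 : Sum.inr (x k) ∈ T := by
        rw [hT_def]; exact mem_insert_of_mem (mem_singleton_self _)
      have hBρs : ∀ s u : ℤ, μ (A ∩ ({ω | B k ω = s} ∩ {ω | ρ0 ω (x k) = u})) =
          μ A * (μ {ω | B k ω = s} * μ {ω | ρ0 ω (x k) = u}) := by
        intro s u
        have hU := hindA E hE T hTdisj
          {v : (i : T) → ℤ | v ⟨Sum.inl k, hi1⟩ = s ∧ v ⟨Sum.inr (x k), hi2⟩ = u}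
        have hpre : (fun ω (i : T) => f (i : ℕ ⊕ ℤ) ω) ⁻¹'
            {v : (i : T) → ℤ | v ⟨Sum.inl k, hi1⟩ = s ∧ v ⟨Sum.inr (x k), hi2⟩ = u} =
            {ω | B k ω = s} ∩ {ω | ρ0 ω (x k) = u} := rfl
        rw [hpre] at hU
        rw [hU]
        congr 1
        have hBρ : IndepFun (B k) (fun ω => ρ0 ω (x k)) μ :=
          hindep.indepFun (show (Sum.inl k : ℕ ⊕ ℤ) ≠ Sum.inr (x k) by simp)
        exact (indepFun_iff_measure_inter_preimage_eq_mul.1 hBρ) {s} {u}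
          (measurableSet_singleton s) (measurableSet_singleton u)
      -- the integrand on A
      have hΔA : ∀ ω ∈ A, Δ k ω = ((B k ω * ρ0 ω (x k) : ℤ) : ℝ) := by
        intro ω hω
        have hmem := (hmemA ω).1 hω
        have hfreshω : ∀ j, j < k → (rotorState (ρ0 ω) (fun i => B i ω) j).2 ≠
            (rotorState (ρ0 ω) (fun i => B i ω) k).2 := by
          intro j hj
          rw [← hXdef, ← hXdef, hmem j (le_of_lt hj), hmem k (le_refl k)]
          exact hrev j hj
        have hrot := rotor_fresh (ρ0 ω) (fun i => B i ω)
          ((rotorState (ρ0 ω) (fun i => B i ω) k).2) k hfreshω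
        rw [hΔform ω, hrot, ← hXdef, hmem k (le_refl k)]
      have hprodval : ∀ ω, B k ω * ρ0 ω (x k) = 1 ∨ B k ω * ρ0 ω (x k) = -1 := by
        intro ω
        rcases hBval k ω with h1 | h1 <;> rcases hρval (x k) ω with h2 | h2 <;>
          rw [h1, h2] <;> norm_num
      have hint2 : Integrable (fun ω => ((B k ω * ρ0 ω (x k) : ℤ) : ℝ)) μ := by
        refine (integrable_const (1 : ℝ)).mono'
          ((measurable_of_countable _).comp ((hBmeas k).mul (hρmeas (x k)))).aestronglyMeasurable
          (ae_of_all _ fun ω => ?_)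
        rw [Real.norm_eq_abs]
        rcases hprodval ω with h | h <;> rw [h] <;> norm_num
      have hρm : Measurable (fun ω => ρ0 ω (x k)) := hρmeas (x k)
      have hms1 : MeasurableSet {ω | B k ω = 1} := hBmeas k (measurableSet_singleton 1)
      have hmsm1 : MeasurableSet {ω | B k ω = -1} := hBmeas k (measurableSet_singleton (-1))
      have hrs1 : MeasurableSet {ω | ρ0 ω (x k) = 1} := hρm (measurableSet_singleton 1)
      have hrsm1 : MeasurableSet {ω | ρ0 ω (x k) = -1} := hρm (measurableSet_singleton (-1))
      rw [setIntegral_congr_fun hAmeas hΔA,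
        setIntegral_split μ hAmeas (hBmeas k) (hBval k) hint2,
        setIntegral_split μ (hAmeas.inter hms1) hρm (hρval (x k)) hint2,
        setIntegral_split μ (hAmeas.inter hmsm1) hρm (hρval (x k)) hint2]
      rw [setIntegral_eq_const μ ((hAmeas.inter hms1).inter hrs1)
          (fun ω hω => by
            rw [show B k ω = 1 from hω.1.2, show ρ0 ω (x k) = 1 from hω.2]),
        setIntegral_eq_const μ ((hAmeas.inter hms1).inter hrsm1)
          (fun ω hω => by
            rw [show B k ω = 1 from hω.1.2, show ρ0 ω (x k) = -1 from hω.2]),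
        setIntegral_eq_const μ ((hAmeas.inter hmsm1).inter hrs1)
          (fun ω hω => by
            rw [show B k ω = -1 from hω.1.2, show ρ0 ω (x k) = 1 from hω.2]),
        setIntegral_eq_const μ ((hAmeas.inter hmsm1).inter hrsm1)
          (fun ω hω => by
            rw [show B k ω = -1 from hω.1.2, show ρ0 ω (x k) = -1 from hω.2])]
      rw [Set.inter_assoc, Set.inter_assoc, Set.inter_assoc, Set.inter_assoc]
      rw [hBρs 1 1, hBρs 1 (-1), hBρs (-1) 1, hBρs (-1) (-1)]
      have hB1 := hBlaw k
      have hBm1 := law_neg (hBmeas k) (hBval k) (le_of_lt hp0) (le_of_lt hp1) (hBlaw k)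
      rcases lt_trichotomy (x k) 0 with hxk | hxk | hxk
      · -- x k < 0
        have hρ1 := law_neg' hρm (hρval (x k)) hβ.1 hβ.2 (hρneg (x k) hxk)
        have hρ2 := hρneg (x k) hxk
        rw [hB1, hBm1, hρ1, hρ2]
        unfold cVal
        rw [if_neg (fun hc => by obtain ⟨j, hj, hje⟩ := hc; exact hrev j hj hje),
          if_neg (by omega), if_pos hxk]
        simp only [ENNReal.toReal_mul, ENNReal.toReal_ofReal (le_of_lt hp0),
          ENNReal.toReal_ofReal (le_of_lt (by linarith : (0:ℝ) < 1 - p)),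
          ENNReal.toReal_ofReal hβ.1,
          ENNReal.toReal_ofReal (by linarith [hβ.2] : (0:ℝ) ≤ 1 - β)]
        ring
      · -- x k = 0
        have hρ1 : μ {ω | ρ0 ω (x k) = 1} = ENNReal.ofReal (1/2) := by
          rw [hxk, hρzero]
          rw [ENNReal.ofReal_div_of_pos (by norm_num), ENNReal.ofReal_one,
            ENNReal.ofReal_ofNat]
        have hρ2 : μ {ω | ρ0 ω (x k) = -1} = ENNReal.ofReal (1/2) := by
          have := law_neg (g := fun ω => ρ0 ω (x k)) hρm (hρval (x k))
            (by norm_num) (by norm_num) hρ1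
          rw [this]
          norm_num
        rw [hB1, hBm1, hρ1, hρ2]
        unfold cVal
        rw [if_neg (fun hc => by obtain ⟨j, hj, hje⟩ := hc; exact hrev j hj hje),
          if_neg (by omega), if_neg (by omega)]
        simp only [ENNReal.toReal_mul, ENNReal.toReal_ofReal (le_of_lt hp0),
          ENNReal.toReal_ofReal (le_of_lt (by linarith : (0:ℝ) < 1 - p)),
          ENNReal.toReal_ofReal (by norm_num : (0:ℝ) ≤ 1/2)]
        ring
      · -- 0 < x k
        have hρ1 := hρpos (x k) hxk
        have hρ2 := law_neg hρm (hρval (x k)) hα.1 hα.2 (hρpos (x k) hxk)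
        rw [hB1, hBm1, hρ1, hρ2]
        unfold cVal
        rw [if_neg (fun hc => by obtain ⟨j, hj, hje⟩ := hc; exact hrev j hj hje),
          if_pos hxk]
        simp only [ENNReal.toReal_mul, ENNReal.toReal_ofReal (le_of_lt hp0),
          ENNReal.toReal_ofReal (le_of_lt (by linarith : (0:ℝ) < 1 - p)),
          ENNReal.toReal_ofReal hα.1,
          ENNReal.toReal_ofReal (by linarith [hα.2] : (0:ℝ) ≤ 1 - α)]
        ring
  -- assemble: every F k-measurable set is a countable disjoint union of atoms
  refine (ae_eq_condExp_of_forall_setIntegral_eq hm hΔint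
    (fun s _ _ => hgint.integrableOn) ?_ hgm).symm
  intro s hs _
  rw [hFeq] at hs
  obtain ⟨S, -, rfl⟩ := hs
  have hdisj : Pairwise (Function.onFun Disjoint fun w : S => t ⁻¹' {(w : Fin (k + 1) → ℤ)}) := by
    intro w1 w2 hne
    simp only [Function.onFun]
    rw [Set.disjoint_left]
    intro ω h1 h2
    rw [Set.mem_preimage, Set.mem_singleton_iff] at h1 h2
    exact hne (Subtype.ext (h1.symm.trans h2))
  have huni : t ⁻¹' S = ⋃ w : S, t ⁻¹' {(w : Fin (k + 1) → ℤ)} := by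
    ext ω
    simp only [Set.mem_preimage, Set.mem_iUnion, Set.mem_singleton_iff]
    constructor
    · intro h; exact ⟨⟨t ω, h⟩, rfl⟩
    · rintro ⟨w, hw⟩; rw [hw]; exact w.2
  rw [huni, integral_iUnion (fun w => htmeas (measurableSet_singleton _)) hdisj
      hgint.integrableOn,
    integral_iUnion (fun w => htmeas (measurableSet_singleton _)) hdisj
      hΔint.integrableOn]
  exact tsum_congr fun w => hatom w

end CondExp

end Prob

end RotorAux

/-- for the p-rotor walk with `(α,β)`-random initial configuration,
with martingale part `Y_n = Σ_{k<n}(Δ_k − E[Δ_k|F_k])`, one has a.s.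
`X_n = W_n + a M_n + b m_n` for all `n ≥ 1`, where `a = α(2p−1)/p`,
`b = β(2p−1)/p` and `W_n = (Y_{n+1} − Δ_n)/(2p)`. -/
theorem rotorWalk_decomposition {Ω : Type*} [m0 : MeasurableSpace Ω] (μ : Measure Ω)
    [IsProbabilityMeasure μ] (p α β : ℝ) (hp : p ∈ Set.Ioo (0 : ℝ) 1)
    (hα : α ∈ Set.Icc (0 : ℝ) 1) (hβ : β ∈ Set.Icc (0 : ℝ) 1)
    (B : ℕ → Ω → ℤ) (ρ0 : Ω → ℤ → ℤ)
    (hBmeas : ∀ n, Measurable (B n)) (hρmeas : ∀ x, Measurable fun ω => ρ0 ω x)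
    (hBval : ∀ n ω, B n ω = 1 ∨ B n ω = -1)
    (hBlaw : ∀ n, μ {ω | B n ω = 1} = ENNReal.ofReal p)
    (hρval : ∀ x ω, ρ0 ω x = 1 ∨ ρ0 ω x = -1)
    (hρpos : ∀ x : ℤ, 0 < x → μ {ω | ρ0 ω x = 1} = ENNReal.ofReal α)
    (hρneg : ∀ x : ℤ, x < 0 → μ {ω | ρ0 ω x = -1} = ENNReal.ofReal β)
    (hρzero : μ {ω | ρ0 ω 0 = 1} = 1 / 2)
    (hindep : iIndepFun
      (Sum.elim B (fun x ω => ρ0 ω x) : ℕ ⊕ ℤ → Ω → ℤ) μ)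
    -- the walk, its natural filtration, the increments and the martingale part
    (X : ℕ → Ω → ℤ) (hX : ∀ n ω, X n ω = rotorWalk (ρ0 ω) (fun k => B k ω) n)
    (F : ℕ → MeasurableSpace Ω)
    (hFdef : ∀ n, F n = ⨆ k ∈ range (n + 1), MeasurableSpace.comap (X k) ⊤)
    (Δ : ℕ → Ω → ℝ) (hΔ : ∀ k ω, Δ k ω = ((X (k + 1) ω - X k ω : ℤ) : ℝ))
    (Y : ℕ → Ω → ℝ)
    (hY : ∀ n ω, Y n ω = ∑ k ∈ range n, (Δ k ω - (μ[Δ k | F k]) ω)) :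
    ∀ n : ℕ, 1 ≤ n → ∀ᵐ ω ∂μ,
      ((X n ω : ℤ) : ℝ) = (Y (n + 1) ω - Δ n ω) / (2 * p) +
        (α * (2 * p - 1) / p) * ((runMaxZ (fun k => X k ω) n : ℤ) : ℝ) +
        (β * (2 * p - 1) / p) * ((runMinZ (fun k => X k ω) n : ℤ) : ℝ) := by
  intro n hn
  have hCE : ∀ k : ℕ, μ[Δ k | F k] =ᵐ[μ]
      fun ω => (2 * p - 1) * RotorAux.cVal α β (fun j => X j ω) k :=
    fun k => RotorAux.condexp_delta μ p α β hp hα hβ B ρ0 hBmeas hρmeas hBval hBlaw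
      hρval hρpos hρneg hρzero hindep X hX F hFdef Δ hΔ k
  have hall : ∀ᵐ ω ∂μ, ∀ k : ℕ,
      (μ[Δ k | F k]) ω = (2 * p - 1) * RotorAux.cVal α β (fun j => X j ω) k := by
    rw [ae_all_iff]
    exact hCE
  filter_upwards [hall] with ω hω
  set x : ℕ → ℤ := fun j => X j ω with hx
  have hstepx : ∀ i, x (i + 1) - x i = 1 ∨ x (i + 1) - x i = -1 := by
    intro i
    have hXr : ∀ m, x m = (rotorState (ρ0 ω) (fun j => B j ω) m).2 := fun m => hX m ω
    rw [hXr (i + 1), hXr i]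
    exact RotorAux.step_pm _ _ (fun y => hρval y ω) (fun m => hBval m ω) i
  have hx0 : x 0 = 0 := (hX 0 ω).trans rfl
  have hYsum : Y (n + 1) ω =
      ∑ k ∈ range (n + 1), (Δ k ω - (2 * p - 1) * RotorAux.cVal α β x k) := by
    rw [hY]
    exact Finset.sum_congr rfl fun k _ => by rw [hω k]
  have hsumΔ : ∑ k ∈ range (n + 1), Δ k ω = ((x (n + 1) : ℤ) : ℝ) := by
    have hterm : ∀ k ∈ range (n + 1), Δ k ω = ((x (k + 1) : ℤ) : ℝ) - ((x k : ℤ) : ℝ) := by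
      intro k _
      rw [hΔ]
      push_cast
      ring
    rw [Finset.sum_congr rfl hterm, Finset.sum_range_sub (fun k => ((x k : ℤ) : ℝ)), hx0]
    norm_num
  have hsumC := RotorAux.sum_cVal hx0 hstepx α β n
  have hY' : Y (n + 1) ω - Δ n ω = ((x n : ℤ) : ℝ) -
      (2 * p - 1) * (2 * α * ((runMaxZ x n : ℤ) : ℝ) + 2 * β * ((runMinZ x n : ℤ) : ℝ) -
        ((x n : ℤ) : ℝ)) := by
    have hΔn : Δ n ω = ((x (n + 1) : ℤ) : ℝ) - ((x n : ℤ) : ℝ) := by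
      rw [hΔ]; push_cast; ring
    rw [hYsum, Finset.sum_sub_distrib, hsumΔ, ← Finset.mul_sum, hsumC, hΔn]
    ring
  rw [hY']
  have hpne : p ≠ 0 := ne_of_gt hp.1
  field_simp
  ring
end

section
/- The native p-rotor walk (U_n) on ℤ (with initial rotors all pointing toward the origin) is a correlated random walk with persistence 1−p: conditional on the past, at each step n ≥ 1 the walk repeats its previous step with probability 1−p and reverses direction with probability p. -/
open MeasureTheory ProbabilityTheory Finset

def nativeRho (R : ℤ) : ℤ → ℤ := fun x => if 0 < x then -1 else if x < 0 then 1 else R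

lemma rotorState_succ (ρ0 : ℤ → ℤ) (b : ℕ → ℤ) (n : ℕ) :
    rotorState ρ0 b (n + 1) =
      (Function.update (rotorState ρ0 b n).1 (rotorState ρ0 b n).2
        (b n * (rotorState ρ0 b n).1 (rotorState ρ0 b n).2),
       (rotorState ρ0 b n).2 + b n * (rotorState ρ0 b n).1 (rotorState ρ0 b n).2) := by
  simp [rotorState, rotorStep]

lemma rotor_inv (R : ℤ) (b : ℕ → ℤ) (hR : R = 1 ∨ R = -1)
    (hb : ∀ k, b k = 1 ∨ b k = -1) : ∀ n : ℕ,
    (∀ x, (rotorState (nativeRho R) b n).2 < x → (rotorState (nativeRho R) b n).1 x = -1) ∧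
    (∀ x, x < (rotorState (nativeRho R) b n).2 → (rotorState (nativeRho R) b n).1 x = 1) ∧
    ((rotorState (nativeRho R) b n).1 ((rotorState (nativeRho R) b n).2) = 1 ∨
     (rotorState (nativeRho R) b n).1 ((rotorState (nativeRho R) b n).2) = -1) := by
  intro n
  induction n with
  | zero =>
    refine ⟨fun x hx => ?_, fun x hx => ?_, ?_⟩
    · simp only [rotorState] at hx
      simp only [rotorState, nativeRho]
      simp [hx]
    · simp only [rotorState] at hx
      simp only [rotorState, nativeRho]
      rw [if_neg (by omega), if_pos hx]
    · simp only [rotorState, nativeRho]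
      simpa using hR
  | succ n ih =>
    obtain ⟨h1, h2, h3⟩ := ih
    rw [rotorState_succ]
    set S := rotorState (nativeRho R) b n with hS
    set s := b n * S.1 S.2 with hs
    have hspm : s = 1 ∨ s = -1 := by
      rcases hb n with h | h <;> rcases h3 with h' | h' <;> rw [hs, h, h'] <;> norm_num
    refine ⟨fun x hx => ?_, fun x hx => ?_, ?_⟩
    · simp only at hx ⊢
      rcases eq_or_ne x S.2 with h | h
      · subst h; rw [Function.update_self]; omega
      · rw [Function.update_of_ne h]
        exact h1 x (by omega)
    · simp only at hx ⊢
      rcases eq_or_ne x S.2 with h | h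
      · subst h; rw [Function.update_self]; omega
      · rw [Function.update_of_ne h]
        exact h2 x (by omega)
    · simp only
      rw [Function.update_of_ne (by omega)]
      rcases hspm with h | h
      · right; exact h1 _ (by omega)
      · left; exact h2 _ (by omega)

lemma rotor_at (R : ℤ) (b : ℕ → ℤ) (hR : R = 1 ∨ R = -1)
    (hb : ∀ k, b k = 1 ∨ b k = -1) (n : ℕ) :
    (rotorState (nativeRho R) b (n + 1)).1 ((rotorState (nativeRho R) b (n + 1)).2)
      = (rotorState (nativeRho R) b n).2 - (rotorState (nativeRho R) b (n + 1)).2 := by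
  obtain ⟨h1, h2, h3⟩ := rotor_inv R b hR hb n
  rw [rotorState_succ]
  set S := rotorState (nativeRho R) b n with hS
  set s := b n * S.1 S.2 with hs
  have hspm : s = 1 ∨ s = -1 := by
    rcases hb n with h | h <;> rcases h3 with h' | h' <;> rw [hs, h, h'] <;> norm_num
  simp only
  rw [Function.update_of_ne (by omega)]
  rcases hspm with h | h
  · rw [h] at *; rw [h1 _ (by omega)]; ring
  · rw [h] at *; rw [h2 _ (by omega)]; ring

lemma walk_rec (R : ℤ) (b : ℕ → ℤ) (hR : R = 1 ∨ R = -1)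
    (hb : ∀ k, b k = 1 ∨ b k = -1) (n : ℕ) :
    rotorWalk (nativeRho R) b (n + 2) = rotorWalk (nativeRho R) b (n + 1)
      + b (n + 1) * (rotorWalk (nativeRho R) b n - rotorWalk (nativeRho R) b (n + 1)) := by
  have h := rotor_at R b hR hb n
  show (rotorState (nativeRho R) b (n + 2)).2 = _
  rw [show n + 2 = (n + 1) + 1 from rfl, rotorState_succ, h]
  rfl

lemma walk_step (R : ℤ) (b : ℕ → ℤ) (hR : R = 1 ∨ R = -1)
    (hb : ∀ k, b k = 1 ∨ b k = -1) (n : ℕ) :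
    rotorWalk (nativeRho R) b (n + 1) - rotorWalk (nativeRho R) b n = 1 ∨
    rotorWalk (nativeRho R) b (n + 1) - rotorWalk (nativeRho R) b n = -1 := by
  obtain ⟨h1, h2, h3⟩ := rotor_inv R b hR hb n
  unfold rotorWalk
  rw [rotorState_succ]
  rcases hb n with h | h <;> rcases h3 with h' | h' <;> rw [h, h'] <;> norm_num

lemma key_iff (R : ℤ) (b : ℕ → ℤ) (hR : R = 1 ∨ R = -1)
    (hb : ∀ k, b k = 1 ∨ b k = -1) (n : ℕ) :
    (rotorWalk (nativeRho R) b (n + 2) - rotorWalk (nativeRho R) b (n + 1)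
      = rotorWalk (nativeRho R) b (n + 1) - rotorWalk (nativeRho R) b n) ↔ b (n + 1) = -1 := by
  have hrec := walk_rec R b hR hb n
  have hstep := walk_step R b hR hb n
  rcases hb (n + 1) with h | h <;> rw [h] at hrec ⊢ <;>
    rcases hstep with h' | h' <;> constructor <;> intro hx <;> omega

lemma walk_one (R : ℤ) (b : ℕ → ℤ) : rotorWalk (nativeRho R) b 1 = b 0 * R := by
  show (rotorState (nativeRho R) b 1).2 = _
  rw [rotorState_succ]
  simp [rotorState, nativeRho]

/-- the native p-rotor walk (all initial rotors pointing toward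
the origin, the rotor at `0` uniform on `{−1,+1}`) is a correlated random walk
with persistence `1−p`: for every `n ≥ 1`, conditionally on the past
`F_n = σ(U_0,…,U_n)`, the walk repeats its previous step with probability
`1−p` (and reverses direction with probability `p`). -/
theorem native_rotorWalk_correlated {Ω : Type*} [m0 : MeasurableSpace Ω] (μ : Measure Ω)
    [IsProbabilityMeasure μ] (p : ℝ) (hp : p ∈ Set.Ioo (0 : ℝ) 1)
    (B : ℕ → Ω → ℤ) (R : Ω → ℤ)
    (hBmeas : ∀ n, Measurable (B n)) (hRmeas : Measurable R)
    (hBval : ∀ n ω, B n ω = 1 ∨ B n ω = -1)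
    (hBlaw : ∀ n, μ {ω | B n ω = 1} = ENNReal.ofReal p)
    (hRval : ∀ ω, R ω = 1 ∨ R ω = -1)
    (hRlaw : μ {ω | R ω = 1} = 1 / 2)
    (hindep : iIndepFun
      (fun i : Option ℕ => i.elim R B) μ)
    -- the native p-rotor walk and its natural filtration
    (U : ℕ → Ω → ℤ)
    (hU : ∀ n ω, U n ω = rotorWalk
      (fun x => if 0 < x then -1 else if x < 0 then 1 else R ω) (fun k => B k ω) n)
    (F : ℕ → MeasurableSpace Ω)
    (hFdef : ∀ n, F n = ⨆ k ∈ range (n + 1), MeasurableSpace.comap (U k) ⊤) :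
    ∀ n : ℕ, 1 ≤ n →
      (μ[(fun ω => if U (n + 1) ω - U n ω = U n ω - U (n - 1) ω
          then (1 : ℝ) else 0) | F n])
        =ᵐ[μ] fun _ => 1 - p := by
  intro n hn
  obtain ⟨m, rfl⟩ : ∃ m, n = m + 1 := ⟨n - 1, by omega⟩
  have hU' : ∀ k ω, U k ω = rotorWalk (nativeRho (R ω)) (fun j => B j ω) k := hU
  have hbω : ∀ ω k, B k ω = 1 ∨ B k ω = -1 := fun ω k => hBval k ω
  -- pointwise identification of the event with {B (m+1) = -1}
  have hiff : ∀ ω, (U (m + 1 + 1) ω - U (m + 1) ω = U (m + 1) ω - U (m + 1 - 1) ω)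
      ↔ B (m + 1) ω = -1 := by
    intro ω
    simp only [Nat.add_sub_cancel]
    rw [hU', hU', hU']
    exact key_iff (R ω) (fun j => B j ω) (hRval ω) (hbω ω) m
  set A : Set Ω := B (m + 1) ⁻¹' {-1} with hA
  have hfeq : (fun ω => if U (m + 1 + 1) ω - U (m + 1) ω = U (m + 1) ω - U (m + 1 - 1) ω
      then (1 : ℝ) else 0) = A.indicator (fun _ => (1 : ℝ)) := by
    funext ω
    by_cases h : B (m + 1) ω = -1
    · rw [if_pos ((hiff ω).mpr h), Set.indicator_of_mem (by simpa [hA] using h)]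
    · rw [if_neg (fun hx => h ((hiff ω).mp hx)),
        Set.indicator_of_notMem (by simpa [hA] using h)]
  rw [hfeq]
  -- compute the expectation
  have hAmeas : MeasurableSet[m0] A := (hBmeas (m + 1)) (measurableSet_singleton _)
  have hAc : A = {ω | B (m + 1) ω = 1}ᶜ := by
    ext ω
    rcases hBval (m + 1) ω with h | h <;> simp [hA, h]
  have hμA : μ A = 1 - ENNReal.ofReal p := by
    have hset : MeasurableSet[m0] {ω | B (m + 1) ω = 1} :=
      (hBmeas (m + 1)) (measurableSet_singleton 1)
    rw [hAc, measure_compl hset (measure_ne_top μ _), hBlaw, measure_univ]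
  have hExp : ∫ ω, A.indicator (fun _ => (1 : ℝ)) ω ∂μ = 1 - p := by
    rw [integral_indicator_const _ hAmeas, measureReal_def, hμA, smul_eq_mul, mul_one,
      ENNReal.toReal_sub_of_le (ENNReal.ofReal_le_one.mpr hp.2.le) ENNReal.one_ne_top,
      ENNReal.toReal_one, ENNReal.toReal_ofReal hp.1.le]
  -- the sigma-algebra of the past
  set T : Set (Option ℕ) := insert none (Option.some '' Set.Iio (m + 1)) with hT
  set m' : MeasurableSpace Ω := ⨆ i ∈ T, MeasurableSpace.comap ((fun i : Option ℕ => i.elim R B) i) ⊤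
    with hm'
  have h_le : ∀ i : Option ℕ,
      MeasurableSpace.comap ((fun i : Option ℕ => i.elim R B) i) ⊤ ≤ m0 := by
    intro i
    match i with
    | none => exact hRmeas.comap_le
    | some j => exact (hBmeas j).comap_le
  have hm'le : m' ≤ m0 := iSup₂_le fun i _ => h_le i
  -- measurability w.r.t. m'
  have hMR : Measurable[m'] R := by
    rw [measurable_iff_comap_le]
    exact le_iSup₂ (f := fun i (_ : i ∈ T) =>
      MeasurableSpace.comap ((fun i : Option ℕ => i.elim R B) i) ⊤) none (Set.mem_insert _ _)
  have hMB : ∀ j, j < m + 1 → Measurable[m'] (B j) := by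
    intro j hj
    rw [measurable_iff_comap_le]
    exact le_iSup₂ (f := fun i (_ : i ∈ T) =>
      MeasurableSpace.comap ((fun i : Option ℕ => i.elim R B) i) ⊤) (some j)
      (Set.mem_insert_iff.mpr (Or.inr ⟨j, hj, rfl⟩))
  have hU0 : ∀ ω, U 0 ω = 0 := fun ω => by rw [hU']; rfl
  have hU1 : ∀ ω, U 1 ω = B 0 ω * R ω := fun ω => by rw [hU']; exact walk_one _ _
  have hUrec : ∀ k ω, U (k + 2) ω
      = U (k + 1) ω + B (k + 1) ω * (U k ω - U (k + 1) ω) := by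
    intro k ω
    rw [hU', hU', hU']
    exact walk_rec (R ω) (fun j => B j ω) (hRval ω) (hbω ω) k
  have hMU : ∀ k, k ≤ m + 1 → Measurable[m'] (U k) := by
    intro k
    induction k using Nat.strong_induction_on with
    | _ k ih =>
      intro hk
      match k, ih, hk with
      | 0, _, _ =>
        rw [show U 0 = fun _ => (0 : ℤ) from funext hU0]
        exact measurable_const
      | 1, _, _ =>
        rw [show U 1 = fun ω => B 0 ω * R ω from funext hU1]
        exact (hMB 0 (by omega)).mul hMR
      | (k + 2), ih, hk =>
        rw [show U (k + 2) = fun ω => U (k + 1) ω + B (k + 1) ω * (U k ω - U (k + 1) ω)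
          from funext (hUrec k)]
        exact (ih (k + 1) (by omega) (by omega)).add
          ((hMB (k + 1) (by omega)).mul
            ((ih k (by omega) (by omega)).sub (ih (k + 1) (by omega) (by omega))))
  have hFle : F (m + 1) ≤ m' := by
    rw [hFdef]
    refine iSup₂_le fun k hk => ?_
    rw [Finset.mem_range] at hk
    exact measurable_iff_comap_le.mp (hMU k (by omega))
  have hle₂ : F (m + 1) ≤ m0 := hFle.trans hm'le
  have hle₁ : MeasurableSpace.comap (B (m + 1)) ⊤ ≤ m0 := (hBmeas (m + 1)).comap_le
  -- independence
  have hdisj : Disjoint ({some (m + 1)} : Set (Option ℕ)) T := by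
    simp only [Set.disjoint_singleton_left, hT, Set.mem_insert_iff, Set.mem_image,
      Set.mem_Iio]
    push_neg
    exact ⟨by simp, fun j hj => by simp; omega⟩
  have hIndep : Indep (MeasurableSpace.comap (B (m + 1)) ⊤) (F (m + 1)) μ := by
    have h := indep_iSup_of_disjoint h_le hindep.iIndep hdisj
    rw [_root_.iSup_singleton] at h
    exact indep_of_indep_of_le_right h hFle
  have hAm : MeasurableSet[MeasurableSpace.comap (B (m + 1)) ⊤] A := ⟨{-1}, trivial, rfl⟩
  have hsm : StronglyMeasurable[MeasurableSpace.comap (B (m + 1)) ⊤]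
      (A.indicator (fun _ => (1 : ℝ))) := stronglyMeasurable_const.indicator hAm
  refine (condExp_indep_eq hle₁ hle₂ hsm hIndep).trans
    (Filter.Eventually.of_forall fun ω => ?_)
  simpa using hExp
end

section
/- Let a, b < 1 and suppose X is a continuous process with X(0)=0 satisfying X(t) = B(t) + a·sup_{s≤t}X(s) with b = 0, where B is a continuous function with B(0)=0. Then sup_{s≤t} X(s) = (1/(1−a))·sup_{s≤t} B(s) and hence X(t) = B(t) + (a/(1−a))·sup_{s≤t} B(s) for all t ≥ 0. -/
/-- if a continuous `X` with `X(0)=0` solves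
`X(t) = B(t) + a·sup_{s≤t} X(s)` (the case `b = 0`) for a continuous `B` with
`B(0)=0` and `a < 1`, then `sup_{s≤t} X(s) = (1/(1−a))·sup_{s≤t} B(s)` and
`X(t) = B(t) + (a/(1−a))·sup_{s≤t} B(s)` for all `t ≥ 0`. -/
theorem one_sided_perturbed_explicit (a b : ℝ) (ha : a < 1) (hb : b < 1) (hb0 : b = 0)
    (X B : ℝ → ℝ) (hXc : Continuous X) (hBc : Continuous B)
    (hX0 : X 0 = 0) (hB0 : B 0 = 0)
    (heq : ∀ t ≥ 0, X t = B t + a * sSup (X '' Set.Icc 0 t) + b * sInf (X '' Set.Icc 0 t)) :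
    ∀ t ≥ 0,
      sSup (X '' Set.Icc 0 t) = (1 / (1 - a)) * sSup (B '' Set.Icc 0 t) ∧
      X t = B t + (a / (1 - a)) * sSup (B '' Set.Icc 0 t) := by
  subst hb0
  intro t ht
  have h1a : (0:ℝ) < 1 - a := by linarith
  have heq' : ∀ s, 0 ≤ s → X s = B s + a * sSup (X '' Set.Icc 0 s) := by
    intro s hs; have := heq s hs; simpa using this
  have hbdd : ∀ s : ℝ, BddAbove (X '' Set.Icc 0 s) :=
    fun s => (isCompact_Icc.image hXc).bddAbove
  have hbddB : ∀ s : ℝ, BddAbove (B '' Set.Icc 0 s) :=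
    fun s => (isCompact_Icc.image hBc).bddAbove
  have hXle : ∀ s, 0 ≤ s → X s ≤ sSup (X '' Set.Icc 0 s) := fun s hs =>
    le_csSup (hbdd s) ⟨s, ⟨hs, le_refl s⟩, rfl⟩
  have hmono : ∀ s, 0 ≤ s → s ≤ t →
      sSup (X '' Set.Icc 0 s) ≤ sSup (X '' Set.Icc 0 t) := by
    intro s hs hst
    exact csSup_le_csSup (hbdd t) ((Set.nonempty_Icc.2 hs).image X)
      (Set.image_mono (f := X) (Set.Icc_subset_Icc le_rfl hst))
  -- Upper bound: MB t ≤ (1-a) * MX t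
  have hup : sSup (B '' Set.Icc 0 t) ≤ (1 - a) * sSup (X '' Set.Icc 0 t) := by
    apply csSup_le ((Set.nonempty_Icc.2 ht).image B)
    rintro y ⟨u, hu, rfl⟩
    have h1 : B u = X u - a * sSup (X '' Set.Icc 0 u) := by
      have := heq' u hu.1; linarith
    have h2 : X u ≤ sSup (X '' Set.Icc 0 u) := hXle u hu.1
    have h3 : sSup (X '' Set.Icc 0 u) ≤ sSup (X '' Set.Icc 0 t) := hmono u hu.1 hu.2
    nlinarith
  -- Lower bound via maximizer
  obtain ⟨s, hs, hsSup⟩ := isCompact_Icc.exists_sSup_image_eq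
      (Set.nonempty_Icc.2 ht) hXc.continuousOn
  have hMXs : sSup (X '' Set.Icc 0 s) = sSup (X '' Set.Icc 0 t) := by
    refine le_antisymm (hmono s hs.1 hs.2) ?_
    rw [hsSup]; exact hXle s hs.1
  have hlow : (1 - a) * sSup (X '' Set.Icc 0 t) ≤ sSup (B '' Set.Icc 0 t) := by
    have h1 := heq' s hs.1
    rw [hMXs] at h1
    have h2 : B s ≤ sSup (B '' Set.Icc 0 t) := le_csSup (hbddB t) ⟨s, hs, rfl⟩
    nlinarith [hsSup]
  have key : (1 - a) * sSup (X '' Set.Icc 0 t) = sSup (B '' Set.Icc 0 t) :=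
    le_antisymm hlow hup
  have hMX : sSup (X '' Set.Icc 0 t) = (1 / (1 - a)) * sSup (B '' Set.Icc 0 t) := by
    field_simp
    linarith [key]
  refine ⟨hMX, ?_⟩
  have := heq' t ht
  rw [hMX] at this
  rw [this]; ring
end
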